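/- arXiv:1602.06173 — 4 statements merged into one kernel-verified Lean document; each statement's English description precedes it below -/
import Mathlib

section
/- D_1 ∩ (1, ∞) = [z_1, ∞), where z_1 = 1/(q_G − 1) = q_G. -/
open Filter Topology

noncomputable section

/-- The value `Σ_{i≥0} d i / q^(i+1)` of a (0-indexed) digit sequence `d` in base `q`;
this corresponds to `((d_i)_{i≥1})_q` with `d_i = d (i-1)`. -/
def seqVal (q : ℝ) (d : ℕ → ℕ) : ℝ := ∑' i : ℕ, (d i : ℝ) / q ^ (i + 1)

/-- `d` is a `q`-expansion of `x` with digits in `{0,1}`. -/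
def IsExpansion (q x : ℝ) (d : ℕ → ℕ) : Prop :=
  (∀ i, d i ≤ 1) ∧ x = seqVal q d

/-- `x` has a unique `q`-expansion. -/
def HasUniqueExpansion (q x : ℝ) : Prop := ∃! d : ℕ → ℕ, IsExpansion q x d

/-- The set `U(x)` of univoque bases of `x`. -/
def UBases (x : ℝ) : Set ℝ := {q | 1 < q ∧ q < 2 ∧ HasUniqueExpansion q x}

/-- `q_s(x) = inf U(x)`. -/
def qs (x : ℝ) : ℝ := sInf (UBases x)

/-- The univoque set `U_q` of `x ∈ [0, 1/(q-1)]` with a unique `q`-expansion. -/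
def Uset (q : ℝ) : Set ℝ :=
  {x | x ∈ Set.Icc 0 (1 / (q - 1)) ∧ HasUniqueExpansion q x}

/-- The set `U_q'` of digit sequences which are the unique `q`-expansion of their value. -/
def USeq (q : ℝ) : Set (ℕ → ℕ) :=
  {d | (∀ i, d i ≤ 1) ∧ ∀ e : ℕ → ℕ, IsExpansion q (seqVal q d) e → e = d}

/-- The Thue–Morse sequence: `τ 0 = 0`, `τ (2n) = τ n`, `τ (2n+1) = 1 - τ n`. -/
def IsThueMorse (τ : ℕ → ℕ) : Prop :=
  τ 0 = 0 ∧ (∀ n, τ (2 * n) = τ n) ∧ ∀ n, τ (2 * n + 1) = 1 - τ n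

/-- `q` is the Komornik–Loreti constant: the base in `(1,2)` with `1 = Σ_{i≥1} τ_i q^{-i}`. -/
def IsKL (τ : ℕ → ℕ) (q : ℝ) : Prop :=
  1 < q ∧ q < 2 ∧ (1 : ℝ) = ∑' i : ℕ, (τ (i + 1) : ℝ) / q ^ (i + 1)

/-- `Q` is the sequence of bases `q_n`: `Q 0 = 1` and for `n ≥ 1`, `Q n` is the root in
`(1,2)` of `1 = Σ_{i=1}^{2^n} τ_i q^{-i}`. -/
def IsBaseSeq (τ : ℕ → ℕ) (Q : ℕ → ℝ) : Prop :=
  Q 0 = 1 ∧ ∀ n, 1 ≤ n → 1 < Q n ∧ Q n < 2 ∧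
    (1 : ℝ) = ∑ i ∈ Finset.range (2 ^ n), (τ (i + 1) : ℝ) / (Q n) ^ (i + 1)

/-- `D_n = ⋃_{q ∈ (q_{n-1}, q_n]} U_q`. -/
def D (Q : ℕ → ℝ) (n : ℕ) : Set ℝ := ⋃ q ∈ Set.Ioc (Q (n - 1)) (Q n), Uset q

/-- The golden ratio. -/
def qG : ℝ := (1 + Real.sqrt 5) / 2

/-- Strict lexicographical order on digit sequences. -/
def seqLt (c d : ℕ → ℕ) : Prop := ∃ n, (∀ i, i < n → c i = d i) ∧ c n < d n

/-- The word `τ_1 ⋯ τ_m`. -/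
def tmPrefix (τ : ℕ → ℕ) (m : ℕ) : List ℕ := (List.range m).map fun i => τ (i + 1)

/-- `w⁻`: decrease the last digit of a word by 1. -/
def lastDec (w : List ℕ) : List ℕ := w.dropLast ++ [w.getLastD 0 - 1]

/-- `w⁺`: increase the last digit of a word by 1. -/
def lastInc (w : List ℕ) : List ℕ := w.dropLast ++ [w.getLastD 0 + 1]

/-- The reflection of a word. -/
def reflect (w : List ℕ) : List ℕ := w.map fun d => 1 - d

/-- The infinite sequence given by the prefix `p` followed by periodic repetition of `w`. -/
def prefPeriodic (p w : List ℕ) : ℕ → ℕ := fun j =>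
  if j < p.length then p.getD j 0 else w.getD ((j - p.length) % w.length) 0

/-- `z_n = ((τ_1⋯τ_{2^{n-1}})(τ_{2^{n-1}+1}⋯τ_{2^n})^∞)_{q_n}`. -/
def zVal (τ : ℕ → ℕ) (Q : ℕ → ℝ) (n : ℕ) : ℝ :=
  seqVal (Q n) (prefPeriodic (tmPrefix τ (2 ^ (n - 1)))
    ((List.range (2 ^ (n - 1))).map fun i => τ (2 ^ (n - 1) + (i + 1))))

/-- `z_{1,k} = Σ_{i=1}^k q_G^{-i} + 1/(q_G^k (q_G^2 - 1))`. -/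
def z1 (k : ℕ) : ℝ :=
  (∑ i ∈ Finset.range k, 1 / qG ^ (i + 1)) + 1 / (qG ^ k * (qG ^ 2 - 1))

namespace D1Aux

lemma summable_digits {q : ℝ} (hq : 1 < q) (d : ℕ → ℕ) (hd : ∀ i, d i ≤ 1) :
    Summable (fun i => (d i : ℝ) / q ^ (i + 1)) := by
  have hq0 : (0:ℝ) < q := lt_trans one_pos hq
  have h1 : (0:ℝ) ≤ 1/q := by positivity
  have h2 : 1/q < 1 := by rw [div_lt_one hq0]; exact hq
  have hg : Summable (fun i : ℕ => (1/q) ^ (i+1)) := by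
    simpa [pow_succ, mul_comm] using (summable_geometric_of_lt_one h1 h2).mul_left (1/q)
  refine hg.of_nonneg_of_le (fun i => by positivity) (fun i => ?_)
  rw [one_div, inv_pow, ← one_div]
  have hdi : (d i : ℝ) ≤ 1 := by exact_mod_cast hd i
  gcongr

lemma seqVal_ones {q : ℝ} (hq : 1 < q) : seqVal q (fun _ => 1) = 1 / (q - 1) := by
  have hq0 : (0:ℝ) < q := lt_trans one_pos hq
  have h1 : (0:ℝ) ≤ 1/q := by positivity
  have h2 : 1/q < 1 := by rw [div_lt_one hq0]; exact hq
  have h3 : seqVal q (fun _ => 1) = ∑' i : ℕ, (1/q) * (1/q)^i := by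
    unfold seqVal
    congr 1; funext i
    rw [Nat.cast_one, show (1/q)*(1/q)^i = (1/q)^(i+1) by rw [pow_succ]; ring,
      div_pow, one_pow]
  rw [h3, tsum_mul_left, tsum_geometric_of_lt_one h1 h2]
  have h4 : (1:ℝ) - 1/q ≠ 0 := by
    have : (1:ℝ) - 1/q > 0 := by
      have : 1/q < 1 := h2
      linarith
    linarith
  field_simp

lemma seqVal_nonneg {q : ℝ} (hq : 1 < q) (d : ℕ → ℕ) : 0 ≤ seqVal q d := by
  have hq0 : (0:ℝ) < q := lt_trans one_pos hq
  exact tsum_nonneg (fun i => by positivity)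

lemma seqVal_le_cap {q : ℝ} (hq : 1 < q) (d : ℕ → ℕ) (hd : ∀ i, d i ≤ 1) :
    seqVal q d ≤ 1 / (q - 1) := by
  have hq0 : (0:ℝ) < q := lt_trans one_pos hq
  rw [← seqVal_ones hq]
  refine Summable.tsum_le_tsum (fun i => ?_) (summable_digits hq d hd)
    (summable_digits hq (fun _ => 1) (fun _ => le_refl 1))
  have hdi : (d i : ℝ) ≤ 1 := by exact_mod_cast hd i
  have : (0:ℝ) < q ^ (i+1) := by positivity
  rw [Nat.cast_one]
  gcongr

lemma seqVal_split {q : ℝ} (hq : 1 < q) (d : ℕ → ℕ) (hd : ∀ i, d i ≤ 1) (k : ℕ) :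
    seqVal q d = (∑ i ∈ Finset.range k, (d i : ℝ) / q ^ (i+1))
      + seqVal q (fun i => d (k + i)) / q ^ k := by
  have hq0 : (0:ℝ) < q := lt_trans one_pos hq
  have hs := summable_digits hq d hd
  have h := Summable.sum_add_tsum_nat_add (f := fun i => (d i : ℝ)/q^(i+1)) k hs
  rw [seqVal, ← h]
  congr 1
  rw [seqVal, ← tsum_div_const]
  congr 1; funext i
  rw [add_comm i k, div_div, ← pow_add, show i+1+k = k+i+1 from by omega]


/-- Greedy remainders. -/
noncomputable def gR (q x : ℝ) : ℕ → ℝ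
  | 0 => x
  | k+1 => q * gR q x k - (if 1 ≤ q * gR q x k then 1 else 0)

/-- Greedy digits. -/
noncomputable def gD (q x : ℝ) (k : ℕ) : ℕ := if 1 ≤ q * gR q x k then 1 else 0

lemma gD_le_one (q x : ℝ) (k : ℕ) : gD q x k ≤ 1 := by
  unfold gD; split <;> simp

lemma gR_invariant {q x : ℝ} (hq1 : 1 < q) (hq2 : q < 2)
    (hx0 : 0 ≤ x) (hx1 : x ≤ 1/(q-1)) :
    ∀ k, 0 ≤ gR q x k ∧ gR q x k ≤ 1/(q-1) := by
  have hq0 : (0:ℝ) < q := lt_trans one_pos hq1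
  have hqm : (0:ℝ) < q - 1 := by linarith
  intro k
  induction k with
  | zero => exact ⟨hx0, hx1⟩
  | succ k ih =>
    obtain ⟨h0, h1⟩ := ih
    have hgr : gR q x (k+1) = q * gR q x k - (if 1 ≤ q * gR q x k then 1 else 0) := rfl
    rw [hgr]
    have hmul : q * gR q x k ≤ q * (1/(q-1)) := mul_le_mul_of_nonneg_left h1 hq0.le
    have hq' : q * (1/(q-1)) = 1/(q-1) + 1 := by
      field_simp
      ring
    have h2 : (1:ℝ) ≤ 1/(q-1) := by
      rw [le_div_iff₀ hqm]; linarith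
    split_ifs with h
    · constructor
      · linarith
      · linarith
    · push_neg at h
      have := mul_nonneg hq0.le h0
      constructor
      · linarith
      · linarith

lemma gR_partial {q x : ℝ} (hq1 : 1 < q) :
    ∀ n, (∑ i ∈ Finset.range n, (gD q x i : ℝ) / q ^ (i+1)) = x - gR q x n / q ^ n := by
  have hq0 : (0:ℝ) < q := lt_trans one_pos hq1
  intro n
  induction n with
  | zero => simp [gR]
  | succ n ih =>
    rw [Finset.sum_range_succ, ih]
    have hpow : (q:ℝ) ^ n ≠ 0 := by positivity
    have hq0' : q ≠ 0 := ne_of_gt hq0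
    by_cases hc : 1 ≤ q * gR q x n
    · have hgd : (gD q x n : ℝ) = 1 := by simp [gD, hc]
      have hgr : gR q x (n+1) = q * gR q x n - 1 := by simp [gR, hc]
      rw [hgd, hgr, pow_succ]
      field_simp
      ring
    · have hgd : (gD q x n : ℝ) = 0 := by simp [gD, hc]
      have hgr : gR q x (n+1) = q * gR q x n := by simp [gR, hc]
      rw [hgd, hgr, pow_succ]
      field_simp
      ring

lemma exists_expansion {q : ℝ} (hq1 : 1 < q) (hq2 : q < 2) {x : ℝ}
    (hx0 : 0 ≤ x) (hx1 : x ≤ 1/(q-1)) : ∃ d, IsExpansion q x d := by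
  have hq0 : (0:ℝ) < q := lt_trans one_pos hq1
  have hqm : (0:ℝ) < q - 1 := by linarith
  refine ⟨gD q x, gD_le_one q x, ?_⟩
  have hs := summable_digits hq1 (gD q x) (gD_le_one q x)
  have hlim1 : Tendsto (fun n => ∑ i ∈ Finset.range n, (gD q x i : ℝ) / q ^ (i+1))
      atTop (𝓝 (seqVal q (gD q x))) := hs.hasSum.tendsto_sum_nat
  have hrem : Tendsto (fun n => gR q x n / q ^ n) atTop (𝓝 0) := by
    have h1 : (0:ℝ) ≤ 1/q := by positivity
    have h2 : 1/q < 1 := by rw [div_lt_one hq0]; exact hq1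
    have hb : Tendsto (fun n : ℕ => (1/(q-1)) * (1/q) ^ n) atTop (𝓝 0) := by
      have := (tendsto_pow_atTop_nhds_zero_of_lt_one h1 h2).const_mul (1/(q-1))
      simpa using this
    apply squeeze_zero (fun n => ?_) (fun n => ?_) hb
    · have := (gR_invariant hq1 hq2 hx0 hx1 n).1
      positivity
    · have hub := (gR_invariant hq1 hq2 hx0 hx1 n).2
      have hpow : (0:ℝ) < q ^ n := by positivity
      have hrw : (1/(q-1)) * (1/q)^n = (1/(q-1)) / q^n := by
        rw [div_pow, one_pow]; ring
      rw [hrw]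
      gcongr
  have hlim2 : Tendsto (fun n => ∑ i ∈ Finset.range n, (gD q x i : ℝ) / q ^ (i+1))
      atTop (𝓝 x) := by
    have : Tendsto (fun n => x - gR q x n / q ^ n) atTop (𝓝 (x - 0)) :=
      tendsto_const_nhds.sub hrem
    rw [sub_zero] at this
    refine this.congr (fun n => (gR_partial hq1 n).symm)
  exact (tendsto_nhds_unique hlim2 hlim1)


/-- Splice: digits of `d` before `n`, digit `b` at `n`, then `g`. -/
def splice (d : ℕ → ℕ) (n b : ℕ) (g : ℕ → ℕ) : ℕ → ℕ := fun i =>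
  if i < n then d i else if i = n then b else g (i - (n+1))

lemma splice_digits {d : ℕ → ℕ} {n b : ℕ} {g : ℕ → ℕ}
    (hd : ∀ i, d i ≤ 1) (hb : b ≤ 1) (hg : ∀ i, g i ≤ 1) :
    ∀ i, splice d n b g i ≤ 1 := by
  intro i; unfold splice
  split
  · exact hd i
  · split
    · exact hb
    · exact hg _

lemma splice_val {q : ℝ} (hq : 1 < q) (d : ℕ → ℕ) (n b : ℕ) (g : ℕ → ℕ)
    (hd : ∀ i, d i ≤ 1) (hb : b ≤ 1) (hg : ∀ i, g i ≤ 1) :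
    seqVal q (splice d n b g)
      = (∑ i ∈ Finset.range n, (d i : ℝ) / q ^ (i+1)) + (b:ℝ)/q^(n+1)
        + seqVal q g / q ^ (n+1) := by
  rw [seqVal_split hq _ (splice_digits hd hb hg) (n+1)]
  have h1 : (fun i => splice d n b g (n+1+i)) = g := by
    funext i
    unfold splice
    rw [if_neg (by omega), if_neg (by omega)]
    congr 1
    omega
  have h2 : splice d n b g n = b := by unfold splice; rw [if_neg (by omega), if_pos rfl]
  have h3 : ∑ i ∈ Finset.range n, (splice d n b g i : ℝ) / q ^ (i+1)
      = ∑ i ∈ Finset.range n, (d i : ℝ) / q ^ (i+1) := by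
    apply Finset.sum_congr rfl
    intro i hi
    have h4 : splice d n b g i = d i := by
      unfold splice; rw [if_pos (Finset.mem_range.1 hi)]
    rw [h4]
  rw [h1, Finset.sum_range_succ, h2, h3]

/-- tail value: `s n = seqVal q (fun i => d (n+1+i))`. -/
lemma expansion_head_tail {q x : ℝ} (hq : 1 < q) {d : ℕ → ℕ}
    (hd : IsExpansion q x d) (n : ℕ) :
    x = (∑ i ∈ Finset.range n, (d i : ℝ) / q ^ (i+1)) + (d n : ℝ)/q^(n+1)
        + seqVal q (fun i => d (n+1+i)) / q ^ (n+1) := by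
  rw [hd.2, seqVal_split hq d hd.1 (n+1), Finset.sum_range_succ, add_assoc]

lemma not_unique_of_flip {q x : ℝ} (hq1 : 1 < q) (hq2 : q < 2) {d : ℕ → ℕ}
    (hd : IsExpansion q x d) (n b : ℕ) (hb : b ≤ 1) (hbn : b ≠ d n)
    (hy0 : 0 ≤ seqVal q (fun i => d (n+1+i)) + (d n : ℝ) - b)
    (hy1 : seqVal q (fun i => d (n+1+i)) + (d n : ℝ) - b ≤ 1/(q-1)) :
    ¬ HasUniqueExpansion q x := by
  have hq0 : (0:ℝ) < q := lt_trans one_pos hq1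
  set s := seqVal q (fun i => d (n+1+i)) with hs
  obtain ⟨g, hg⟩ := exists_expansion hq1 hq2 hy0 hy1
  set e := splice d n b g with he
  have hev : IsExpansion q x e := by
    constructor
    · exact splice_digits hd.1 hb hg.1
    · rw [he, splice_val hq1 d n b g hd.1 hb hg.1, ← hg.2]
      rw [expansion_head_tail hq1 hd n]
      have hpow : (q:ℝ)^(n+1) ≠ 0 := by positivity
      field_simp
      ring
  intro hu
  obtain ⟨c, _, hcu⟩ := hu
  have h1 : d = c := hcu d hd
  have h2 : e = c := hcu e hev
  have : e n = d n := by rw [h1, h2]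
  rw [he] at this
  unfold splice at this
  rw [if_neg (by omega), if_pos rfl] at this
  exact hbn this


lemma ones_unique {q : ℝ} (hq1 : 1 < q) (hq2 : q < 2) :
    HasUniqueExpansion q (1/(q-1)) := by
  refine ⟨fun _ => 1, ⟨fun i => le_refl 1, (seqVal_ones hq1).symm⟩, ?_⟩
  rintro e ⟨he1, he2⟩
  funext j
  by_contra h
  have hj : e j = 0 := by have := he1 j; omega
  have hlt : seqVal q e < seqVal q (fun _ => 1) := by
    refine Summable.tsum_lt_tsum (i := j) (fun i => ?_) ?_
      (summable_digits hq1 e he1) (summable_digits hq1 (fun _ => 1) (fun _ => le_refl 1))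
    · have hei : (e i : ℝ) ≤ 1 := by exact_mod_cast he1 i
      have hp : (0:ℝ) < q ^ (i+1) := by positivity
      rw [Nat.cast_one]
      gcongr
    · have hp : (0:ℝ) < q ^ (j+1) := by positivity
      rw [hj, Nat.cast_one, Nat.cast_zero, zero_div]
      positivity
  rw [seqVal_ones hq1, ← he2] at hlt
  exact lt_irrefl _ hlt

lemma not_unique_pattern011 {q x : ℝ} (hq1 : 1 < q) (hq2 : q < 2)
    (hgold : q^2 ≤ q + 1) {d : ℕ → ℕ} (hd : IsExpansion q x d) (p : ℕ)
    (h0 : d p = 0) (h1 : d (p+1) = 1) (h2 : d (p+2) = 1) :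
    ¬ HasUniqueExpansion q x := by
  have hq0 : (0:ℝ) < q := lt_trans one_pos hq1
  have hqm : (0:ℝ) < q - 1 := by linarith
  set e : ℕ → ℕ := fun i => d (p+1+i) with he
  have hesum : ∀ i, e i ≤ 1 := fun i => hd.1 _
  have hsl : 1 ≤ seqVal q e := by
    have hfin : (∑ i ∈ Finset.range 2, (e i : ℝ) / q ^ (i+1)) ≤ seqVal q e :=
      Summable.sum_le_tsum (Finset.range 2) (fun i _ => by positivity) (summable_digits hq1 e hesum)
    have he0 : e 0 = 1 := by simpa [he] using h1
    have he1 : e 1 = 1 := by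
      have : p + 1 + 1 = p + 2 := by omega
      simp [he, this, h2]
    rw [Finset.sum_range_succ, Finset.sum_range_one, he0, he1] at hfin
    have hcalc : (1:ℝ) ≤ (1:ℕ) / q ^ (0+1) + (1:ℕ) / q ^ (1+1) := by
      push_cast
      rw [← sub_nonneg]
      have heq : 1 / q ^ (0+1) + 1 / q ^ (1+1) - 1 = (q + 1 - q^2)/q^2 := by
        field_simp
        ring
      rw [heq]
      apply div_nonneg (by linarith) (by positivity)
    linarith
  apply not_unique_of_flip hq1 hq2 hd p 1 (le_refl 1) (by omega)
  · rw [h0]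
    push_cast
    rw [← he]
    linarith
  · rw [h0]
    push_cast
    rw [← he]
    have := seqVal_le_cap hq1 e hesum
    linarith

lemma not_unique_of_tail_small {q x : ℝ} (hq1 : 1 < q) (hq2 : q < 2)
    {d : ℕ → ℕ} (hd : IsExpansion q x d) (p : ℕ) (h1 : d p = 1)
    (hs : seqVal q (fun i => d (p+1+i)) + 1 ≤ 1/(q-1)) :
    ¬ HasUniqueExpansion q x := by
  apply not_unique_of_flip hq1 hq2 hd p 0 (by omega) (by omega)
  · rw [h1]
    push_cast
    have := seqVal_nonneg hq1 (fun i => d (p+1+i))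
    linarith
  · rw [h1]
    push_cast
    linarith

lemma not_unique_pattern100 {q x : ℝ} (hq1 : 1 < q) (hq2 : q < 2)
    (hgold : q^2 ≤ q + 1) {d : ℕ → ℕ} (hd : IsExpansion q x d) (p : ℕ)
    (h1 : d p = 1) (h0 : d (p+1) = 0) (h2 : d (p+2) = 0) :
    ¬ HasUniqueExpansion q x := by
  have hq0 : (0:ℝ) < q := lt_trans one_pos hq1
  have hqm : (0:ℝ) < q - 1 := by linarith
  apply not_unique_of_tail_small hq1 hq2 hd p h1
  set e : ℕ → ℕ := fun i => d (p+1+i) with he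
  have hesum : ∀ i, e i ≤ 1 := fun i => hd.1 _
  have hsplit := seqVal_split hq1 e hesum 2
  have he0 : e 0 = 0 := by simpa [he] using h0
  have he1 : e 1 = 0 := by
    have : p + 1 + 1 = p + 2 := by omega
    simp [he, this, h2]
  rw [Finset.sum_range_succ, Finset.sum_range_one, he0, he1] at hsplit
  have htail := seqVal_le_cap hq1 (fun i => e (2 + i)) (fun i => hesum _)
  have hq2pos : (0:ℝ) < q ^ 2 := by positivity
  have hse : seqVal q e ≤ (1/(q-1)) / q^2 := by
    rw [hsplit]
    simp only [Nat.cast_zero, zero_div, add_zero, zero_add]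
    gcongr
  have hkey : (1/(q-1)) / q^2 + 1 ≤ 1/(q-1) := by
    rw [← sub_nonneg]
    have heq : 1/(q-1) - ((1/(q-1))/q^2 + 1) = (q^2 - 1 - (q-1)*q^2)/((q-1)*q^2) := by
      field_simp
      ring
    rw [heq]
    apply div_nonneg _ (by positivity)
    nlinarith [mul_nonneg hqm.le (sub_nonneg.2 hgold)]
  linarith

lemma not_unique_alt {q x : ℝ} (hq1 : 1 < q) (hq2 : q < 2)
    (hgold : q^2 ≤ q + 1) {d : ℕ → ℕ} (hd : IsExpansion q x d) (n : ℕ)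
    (h1 : d n = 1) (halt : ∀ i, d (n+1+i) = if Even i then 0 else 1) :
    ¬ HasUniqueExpansion q x := by
  have hq0 : (0:ℝ) < q := lt_trans one_pos hq1
  have hqm : (0:ℝ) < q - 1 := by linarith
  have hq2m : (0:ℝ) < q^2 - 1 := by nlinarith
  apply not_unique_of_tail_small hq1 hq2 hd n h1
  set e : ℕ → ℕ := fun i => d (n+1+i) with he
  have hesum : ∀ i, e i ≤ 1 := fun i => hd.1 _
  have hee : ∀ i, e i = if Even i then 0 else 1 := fun i => halt i
  have hshift : (fun i => e (2 + i)) = e := by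
    funext i
    have hpar : Even (2+i) ↔ Even i := by
      simp [Nat.even_add]
    rw [hee (2+i), hee i]
    simp only [hpar]
  have hsplit := seqVal_split hq1 e hesum 2
  rw [hshift] at hsplit
  have he0 : e 0 = 0 := by simp [hee 0]
  have he1 : e 1 = 1 := by simp [hee 1]
  rw [Finset.sum_range_succ, Finset.sum_range_one, he0, he1] at hsplit
  -- hsplit : seqVal q e = (0/q^1 + 1/q^2) + seqVal q e / q^2
  have hveq : seqVal q e * (q^2 - 1) = 1 := by
    have hq2pos : (q:ℝ)^2 ≠ 0 := by positivity
    field_simp at hsplit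
    have hq3 : (q:ℝ)^3 ≠ 0 := by positivity
    apply mul_left_cancel₀ hq3
    push_cast at hsplit
    linear_combination hsplit
  have hv : seqVal q e = 1/(q^2-1) := by
    field_simp
    linarith [hveq]
  rw [hv, ← sub_nonneg]
  have heq : 1/(q-1) - (1/(q^2-1) + 1) = (q + 1 - q^2)/(q^2-1) := by
    field_simp
    ring
  rw [heq]
  apply div_nonneg (by linarith) hq2m.le


lemma alt_forced {d : ℕ → ℕ} (hd : ∀ i, d i ≤ 1)
    (H : ∀ p, ¬(d p = 0 ∧ d (p+1) = 1 ∧ d (p+2) = 1) ∧ ¬(d p = 1 ∧ d (p+1) = 0 ∧ d (p+2) = 0))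
    {j : ℕ} (hj : d j ≠ d (j+1)) : ∀ k, d (j+k) ≠ d (j+k+1) := by
  intro k
  induction k with
  | zero => simpa using hj
  | succ k ih =>
    have H1 := (H (j+k)).1
    have H2 := (H (j+k)).2
    have h1 := hd (j+k)
    have h2 := hd (j+k+1)
    have h3 := hd (j+k+2)
    have e1 : j + (k+1) = j+k+1 := by omega
    rw [e1]
    have e2 : j+k+1+1 = j+k+2 := by omega
    rw [e2]
    omega

lemma alt_values {d : ℕ → ℕ} (hd : ∀ i, d i ≤ 1) {n : ℕ} (h1 : d n = 1)
    (hne : ∀ k, d (n+k) ≠ d (n+k+1)) : ∀ i, d (n+1+i) = if Even i then 0 else 1 := by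
  intro i
  induction i with
  | zero =>
    have h0 := hne 0
    simp only [Nat.add_zero] at h0
    have h2 := hd (n+1)
    simp only [Nat.add_zero]
    rw [if_pos Even.zero]
    omega
  | succ i ih =>
    have hk := hne (i+1)
    have e1 : n + (i+1) = n+1+i := by omega
    rw [e1] at hk
    have e2 : n+1+i+1 = n+1+(i+1) := by omega
    rw [e2] at hk
    have h2 := hd (n+1+i)
    have h3 := hd (n+1+(i+1))
    rcases Nat.even_or_odd i with hE | hO
    · rw [if_pos hE] at ih
      have hne' : ¬ Even (i+1) := by simp [Nat.even_add_one, hE]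
      rw [if_neg hne']
      omega
    · have hO' : ¬ Even i := Nat.not_even_iff_odd.mpr hO
      rw [if_neg hO'] at ih
      have hE' : Even (i+1) := Nat.even_add_one.mpr hO'
      rw [if_pos hE']
      omega

end D1Aux

/-- `D_1 ∩ (1, ∞) = [z_1, ∞)` with `z_1 = q_G`. -/
theorem D_one_inter_Ioi (τ : ℕ → ℕ) (hτ : IsThueMorse τ)
    (Q : ℕ → ℝ) (hQ : IsBaseSeq τ Q) :
    D Q 1 ∩ Set.Ioi 1 = Set.Ici (zVal τ Q 1) ∧ zVal τ Q 1 = qG := by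
  classical
  obtain ⟨hτ0, hτe, hτo⟩ := hτ
  have hτ1 : τ 1 = 1 := by have := hτo 0; simpa [hτ0] using this
  have hτ2 : τ 2 = 1 := by
    have h := hτe 1
    norm_num at h
    rw [h, hτ1]
  have s5 : Real.sqrt 5 ^ 2 = 5 := Real.sq_sqrt (by norm_num)
  have s5nn : (0:ℝ) ≤ Real.sqrt 5 := Real.sqrt_nonneg 5
  have hqG1 : 1 < qG := by unfold qG; nlinarith [s5, s5nn]
  have hqG2 : qG < 2 := by unfold qG; nlinarith [s5, s5nn]
  have hqGsq : qG^2 = qG + 1 := by unfold qG; linear_combination s5 / 4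
  have hqGinv : 1/(qG-1) = qG := by
    rw [div_eq_iff (by linarith : qG - 1 ≠ 0)]
    linear_combination -hqGsq
  obtain ⟨hQ0, hQn⟩ := hQ
  obtain ⟨hQ1a, hQ1b, hQ1eq⟩ := hQn 1 le_rfl
  rw [show (2:ℕ)^1 = 2 from rfl, Finset.sum_range_succ, Finset.sum_range_one,
    hτ1, hτ2] at hQ1eq
  have hQ1ne : Q 1 ≠ 0 := by linarith
  have hQq : Q 1 ^ 2 = Q 1 + 1 := by
    rw [Nat.cast_one] at hQ1eq
    field_simp at hQ1eq
    have hfac0 : Q 1 * (Q 1^2 - Q 1 - 1) = 0 := by linear_combination hQ1eq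
    rcases mul_eq_zero.1 hfac0 with h | h
    · exact absurd h hQ1ne
    · linarith
  have hQ1G : Q 1 = qG := by
    have hfac : (Q 1 - qG) * (Q 1 + qG - 1) = 0 := by linear_combination hQq - hqGsq
    rcases mul_eq_zero.1 hfac with h | h
    · linarith
    · linarith
  have hones : (prefPeriodic (tmPrefix τ (2 ^ (1 - 1)))
      ((List.range (2 ^ (1 - 1))).map fun i => τ (2 ^ (1 - 1) + (i + 1)))) = fun _ => 1 := by
    funext j
    have hr1 : List.range (2 ^ (1-1)) = [0] := by norm_num [List.range_succ]
    have hp : tmPrefix τ (2 ^ (1 - 1)) = [τ 1] := by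
      rw [tmPrefix, hr1]
      norm_num
    have hw : ((List.range (2 ^ (1 - 1))).map fun i => τ (2 ^ (1 - 1) + (i + 1))) = [τ 2] := by
      rw [hr1]
      norm_num
    rw [hp, hw]
    unfold prefPeriodic
    by_cases hj : j < ([τ 1] : List ℕ).length
    · rw [if_pos hj]
      simp only [List.length_singleton] at hj
      have hj0 : j = 0 := by omega
      subst hj0
      simp [hτ1]
    · rw [if_neg hj]
      simp [Nat.mod_one, hτ2]
  have hz : zVal τ Q 1 = qG := by
    unfold zVal
    rw [hones, hQ1G, D1Aux.seqVal_ones hqG1, hqGinv]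
  refine ⟨?_, hz⟩
  rw [hz]
  have hD : D Q 1 = ⋃ q ∈ Set.Ioc (1:ℝ) qG, Uset q := by
    simp only [D, show (1:ℕ)-1 = 0 from rfl, hQ0, hQ1G]
  ext x
  constructor
  · rintro ⟨hxD, hx1⟩
    rw [hD] at hxD
    rw [Set.mem_iUnion₂] at hxD
    obtain ⟨q, ⟨hq1', hqle⟩, hxmem, hu⟩ := hxD
    have hq2' : q < 2 := lt_of_le_of_lt hqle hqG2
    have hgold : q^2 ≤ q + 1 := by
      nlinarith [mul_nonneg (sub_nonneg.2 hqle) (show (0:ℝ) ≤ q - (1 - qG) by linarith)]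
    obtain ⟨d, hd⟩ := hu.exists
    rw [Set.mem_Ici]
    by_cases hall : ∀ i, d i = 1
    · have hdall : d = fun _ => 1 := funext hall
      have hx : x = 1/(q-1) := by rw [hd.2, hdall, D1Aux.seqVal_ones hq1']
      have : 1/(qG-1) ≤ 1/(q-1) :=
        one_div_le_one_div_of_le (by linarith) (by linarith)
      rw [hx]
      linarith
    · exfalso
      push_neg at hall
      obtain ⟨a, ha⟩ := hall
      have ha0 : d a = 0 := by have := hd.1 a; omega
      have hex1 : ∃ b, d b = 1 := by
        by_contra hc
        push_neg at hc
        have hzero : d = fun _ => 0 := by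
          funext i
          have := hd.1 i
          have := hc i
          omega
        have : x = 0 := by
          rw [hd.2, hzero]
          simp [seqVal]
        rw [this] at hx1
        norm_num at hx1
      by_cases hP : ∃ p, (d p = 0 ∧ d (p+1) = 1 ∧ d (p+2) = 1) ∨
          (d p = 1 ∧ d (p+1) = 0 ∧ d (p+2) = 0)
      · obtain ⟨p, hp | hp⟩ := hP
        · exact D1Aux.not_unique_pattern011 hq1' hq2' hgold hd p hp.1 hp.2.1 hp.2.2 hu
        · exact D1Aux.not_unique_pattern100 hq1' hq2' hgold hd p hp.1 hp.2.1 hp.2.2 hu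
      · push_neg at hP
        have hjex : ∃ j, d j ≠ d (j+1) := by
          by_contra hc
          push_neg at hc
          have hconst : ∀ j, d j = d 0 := by
            intro j
            induction j with
            | zero => rfl
            | succ j ih => rw [← hc j]; exact ih
          obtain ⟨b, hb⟩ := hex1
          have h1 := hconst a
          have h2 := hconst b
          omega
        obtain ⟨j, hj⟩ := hjex
        have hH : ∀ p, ¬(d p = 0 ∧ d (p+1) = 1 ∧ d (p+2) = 1) ∧
            ¬(d p = 1 ∧ d (p+1) = 0 ∧ d (p+2) = 0) := by
          intro p
          have := hP p
          tauto
        have hforce := D1Aux.alt_forced hd.1 hH hj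
        by_cases hdj : d j = 1
        · exact D1Aux.not_unique_alt hq1' hq2' hgold hd j hdj
            (D1Aux.alt_values hd.1 hdj hforce) hu
        · have hdj1 : d (j+1) = 1 := by
            have h1 := hd.1 j
            have h2 := hd.1 (j+1)
            omega
          have hforce' : ∀ k, d (j+1+k) ≠ d (j+1+k+1) := by
            intro k
            have hk := hforce (k+1)
            rw [show j+(k+1) = j+1+k from by omega] at hk
            exact hk
          exact D1Aux.not_unique_alt hq1' hq2' hgold hd (j+1) hdj1
            (D1Aux.alt_values hd.1 hdj1 hforce') hu
  · intro hx
    rw [Set.mem_Ici] at hx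
    have hx1 : 1 < x := lt_of_lt_of_le hqG1 hx
    have hx0 : (0:ℝ) < x := by linarith
    set q : ℝ := 1 + 1/x with hqdef
    have hinvx : (0:ℝ) < 1/x := by positivity
    have hq1' : 1 < q := by rw [hqdef]; linarith
    have hqGne : qG ≠ 0 := by linarith
    have hqGm : qG - 1 = 1/qG := by
      rw [eq_div_iff hqGne]
      linear_combination hqGsq
    have hqle : q ≤ qG := by
      have h1 : 1/x ≤ 1/qG := one_div_le_one_div_of_le (by linarith) hx
      rw [hqdef]
      linarith
    have hq2' : q < 2 := lt_of_le_of_lt hqle hqG2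
    have hqm : q - 1 = 1/x := by rw [hqdef]; ring
    have hxinv : 1/(q-1) = x := by rw [hqm, one_div_one_div]
    constructor
    · rw [hD]
      apply Set.mem_biUnion (show q ∈ Set.Ioc (1:ℝ) qG from ⟨hq1', hqle⟩)
      constructor
      · exact ⟨le_of_lt hx0, le_of_eq hxinv.symm⟩
      · rw [← hxinv]
        exact D1Aux.ones_unique hq1' hq2'
    · exact hx1
end
end

section
/- D_1 ∩ (0, 1) = ∅. -/
open Filter Topology

noncomputable section

variable {q : ℝ}

lemma summable_seq (hq : 1 < q) {d : ℕ → ℕ} (hd : ∀ i, d i ≤ 1) :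
    Summable (fun i : ℕ => (d i : ℝ) / q ^ (i + 1)) := by
  have hq0 : 0 < q := by linarith
  refine Summable.of_nonneg_of_le (fun i => by positivity) (fun i => ?_)
    (summable_geometric_of_lt_one (r := 1/q) (by positivity)
      (by rw [div_lt_one hq0]; linarith))
  have h1 : (d i : ℝ) ≤ 1 := by exact_mod_cast hd i
  have h3 : q ^ i ≤ q ^ (i+1) := pow_le_pow_right₀ hq.le (by omega)
  rw [one_div, inv_pow, div_le_iff₀ (by positivity), inv_mul_eq_div,
    le_div_iff₀ (by positivity)]
  calc (d i : ℝ) * q ^ i ≤ 1 * q^(i+1) :=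
        mul_le_mul h1 h3 (by positivity) zero_le_one
    _ = q^(i+1) := by ring

lemma seqVal_nonneg (hq : 1 < q) (d : ℕ → ℕ) : 0 ≤ seqVal q d :=
  tsum_nonneg fun i => by positivity

lemma seqVal_ones (hq : 1 < q) : seqVal q (fun _ => 1) = 1 / (q - 1) := by
  have hq0 : 0 < q := by linarith
  have h : ∀ i : ℕ, ((1:ℕ) : ℝ) / q ^ (i+1) = (1/q)^i * (1/q) := by
    intro i; rw [pow_succ]; push_cast; field_simp
    rw [← mul_pow, mul_one_div_cancel hq0.ne', one_pow]
  unfold seqVal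
  rw [tsum_congr h, tsum_mul_right, tsum_geometric_of_lt_one (by positivity)
    (by rw [div_lt_one hq0]; linarith)]
  have h1 : (1:ℝ) - 1/q ≠ 0 := by
    have : 1/q < 1 := by rw [div_lt_one hq0]; linarith
    linarith
  have h2 : q - 1 ≠ 0 := by linarith
  field_simp

lemma seqVal_le (hq : 1 < q) {d : ℕ → ℕ} (hd : ∀ i, d i ≤ 1) :
    seqVal q d ≤ 1 / (q - 1) := by
  rw [← seqVal_ones hq]
  apply Summable.tsum_le_tsum _ (summable_seq hq hd) (summable_seq hq (fun _ => le_refl 1))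
  intro i
  have h1 : (d i : ℝ) ≤ 1 := by exact_mod_cast hd i
  have : (0:ℝ) < q ^ (i+1) := by positivity
  gcongr
  exact_mod_cast hd i

/-- Shift decomposition. -/
lemma seqVal_shift (hq : 1 < q) {d : ℕ → ℕ} (hd : ∀ i, d i ≤ 1) (k : ℕ) :
    seqVal q d = (∑ i ∈ Finset.range k, (d i : ℝ) / q ^ (i+1))
      + seqVal q (fun j => d (k + j)) / q ^ k := by
  have hq0 : 0 < q := by linarith
  have hsum := summable_seq hq hd
  have := (Summable.sum_add_tsum_nat_add (f := fun i : ℕ => (d i : ℝ) / q ^ (i+1)) k hsum).symm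
  unfold seqVal
  rw [this]
  congr 1
  have h : ∀ i : ℕ, (d (i + k) : ℝ) / q ^ ((i + k) + 1)
      = ((d (k + i) : ℝ) / q ^ (i+1)) * (1/q^k) := by
    intro i
    rw [Nat.add_comm i k]
    rw [show k + i + 1 = (i+1) + k by ring, pow_add]
    field_simp
  rw [tsum_congr h, tsum_mul_right]
  simp only [mul_one_div]

/-- Greedy remainders. -/
def gRem (q x : ℝ) : ℕ → ℝ
  | 0 => x
  | n + 1 => q * gRem q x n - (if 1 ≤ q * gRem q x n then 1 else 0)

/-- Greedy digits. -/
def gDig (q x : ℝ) (n : ℕ) : ℕ := if 1 ≤ q * gRem q x n then 1 else 0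

lemma gDig_le (q x : ℝ) (n : ℕ) : gDig q x n ≤ 1 := by
  unfold gDig; split <;> omega

lemma gRem_mem (hq : 1 < q) (hq2 : q < 2) {x : ℝ}
    (hx : x ∈ Set.Icc 0 (1/(q-1))) (n : ℕ) : gRem q x n ∈ Set.Icc 0 (1/(q-1)) := by
  have hq0 : 0 < q := by linarith
  have hq1 : 0 < q - 1 := by linarith
  induction n with
  | zero => exact hx
  | succ n ih =>
    obtain ⟨h0, h1⟩ := ih
    have hub : q * gRem q x n ≤ q / (q-1) := by
      rw [div_eq_mul_one_div]
      exact mul_le_mul_of_nonneg_left h1 hq0.le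
    have key : q / (q-1) = 1 + 1/(q-1) := by field_simp; ring
    show q * gRem q x n - (if 1 ≤ q * gRem q x n then 1 else 0) ∈ _
    split
    · constructor
      · linarith
      · rw [key] at hub; linarith
    · constructor
      · have := mul_nonneg hq0.le h0; linarith
      · have : (1:ℝ) ≤ 1/(q-1) := by
          rw [le_div_iff₀ hq1]; linarith
        linarith

lemma gRem_succ (q x : ℝ) (n : ℕ) :
    gRem q x (n+1) = q * gRem q x n - (gDig q x n : ℝ) := by
  show q * gRem q x n - (if 1 ≤ q * gRem q x n then 1 else 0) = _
  unfold gDig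
  split <;> simp

lemma gRem_partial {q : ℝ} (hq : 0 < q) (x : ℝ) (n : ℕ) :
    x = (∑ i ∈ Finset.range n, (gDig q x i : ℝ) / q ^ (i+1)) + gRem q x n / q ^ n := by
  induction n with
  | zero => simp [gRem]
  | succ n ih =>
    rw [Finset.sum_range_succ, gRem_succ]
    have h1 : (q:ℝ) ^ n ≠ 0 := by positivity
    have h2 : (q:ℝ) ^ (n+1) ≠ 0 := by positivity
    have key : (gDig q x n : ℝ)/q^(n+1) + (q * gRem q x n - (gDig q x n : ℝ))/q^(n+1)
        = gRem q x n / q^n := by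
      rw [← add_div, pow_succ]
      field_simp
      ring
    linarith [ih, key]

open Filter Topology in
lemma greedy_isExpansion (hq : 1 < q) (hq2 : q < 2) {x : ℝ}
    (hx : x ∈ Set.Icc 0 (1/(q-1))) : IsExpansion q x (gDig q x) := by
  have hq0 : 0 < q := by linarith
  refine ⟨gDig_le q x, ?_⟩
  have hsum : Summable (fun i : ℕ => (gDig q x i : ℝ) / q ^ (i+1)) :=
    summable_seq hq (gDig_le q x)
  have h1 : Tendsto (fun n => ∑ i ∈ Finset.range n, (gDig q x i : ℝ) / q ^ (i+1))
      atTop (𝓝 (seqVal q (gDig q x))) := hsum.hasSum.tendsto_sum_nat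
  have h2 : Tendsto (fun n : ℕ => gRem q x n / q ^ n) atTop (𝓝 0) := by
    have hb : Tendsto (fun n : ℕ => (1/(q-1)) * (1/q)^n) atTop (𝓝 0) := by
      have := tendsto_pow_atTop_nhds_zero_of_lt_one
        (le_of_lt (by positivity : (0:ℝ) < 1/q)) (by rw [div_lt_one hq0]; linarith)
      simpa using this.const_mul (1/(q-1))
    apply squeeze_zero (fun n => ?_) (fun n => ?_) hb
    · have := (gRem_mem hq hq2 hx n).1
      positivity
    · have h := (gRem_mem hq hq2 hx n).2
      rw [div_le_iff₀ (by positivity : (0:ℝ) < q^n)]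
      calc gRem q x n ≤ 1/(q-1) := h
        _ = 1/(q-1) * (1/q)^n * q^n := by
            rw [div_pow, one_pow, mul_assoc, div_mul_cancel₀ _ (by positivity : (q:ℝ)^n ≠ 0), mul_one]
  have h3 : Tendsto (fun n => ∑ i ∈ Finset.range n, (gDig q x i : ℝ) / q ^ (i+1))
      atTop (𝓝 x) := by
    have : (fun n => ∑ i ∈ Finset.range n, (gDig q x i : ℝ) / q ^ (i+1))
        = fun n => x - gRem q x n / q ^ n := by
      funext n
      have := gRem_partial hq0 x n
      linarith
    rw [this]
    simpa using tendsto_const_nhds.sub h2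
  exact tendsto_nhds_unique h3 h1

/-- Modified sequence: prefix of `d`, digit `b` at position `n`, then `g`. -/
def modSeq (d : ℕ → ℕ) (n b : ℕ) (g : ℕ → ℕ) : ℕ → ℕ := fun i =>
  if i < n then d i else if i = n then b else g (i - (n+1))

lemma modSeq_le {d : ℕ → ℕ} (n b : ℕ) {g : ℕ → ℕ} (hd : ∀ i, d i ≤ 1)
    (hb : b ≤ 1) (hg : ∀ i, g i ≤ 1) : ∀ i, modSeq d n b g i ≤ 1 := by
  intro i; unfold modSeq; split
  · exact hd i
  · split
    · exact hb
    · exact hg _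

lemma modSeq_val (hq : 1 < q) {d : ℕ → ℕ} {n b : ℕ} {g : ℕ → ℕ} (hd : ∀ i, d i ≤ 1)
    (hb : b ≤ 1) (hg : ∀ i, g i ≤ 1) :
    seqVal q (modSeq d n b g) = (∑ i ∈ Finset.range n, (d i : ℝ) / q ^ (i+1))
      + (b : ℝ)/q^(n+1) + seqVal q g / q^(n+1) := by
  have hE := modSeq_le n b hd hb hg
  rw [seqVal_shift hq hE (n+1)]
  have h1 : (fun j => modSeq d n b g (n + 1 + j)) = g := by
    funext j
    unfold modSeq
    rw [if_neg (by omega), if_neg (by omega)]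
    congr 1
    omega
  rw [h1, Finset.sum_range_succ]
  have h2 : ∀ i ∈ Finset.range n, (modSeq d n b g i : ℝ) / q^(i+1) = (d i : ℝ)/q^(i+1) := by
    intro i hi
    rw [Finset.mem_range] at hi
    unfold modSeq
    rw [if_pos hi]
  rw [Finset.sum_congr rfl h2]
  have h3 : modSeq d n b g n = b := by unfold modSeq; rw [if_neg (by omega), if_pos rfl]
  rw [h3]

/-- If `d` is the unique expansion of `x` and `d n = 0`, the tail is `< 1`. -/
lemma cond_zero (hq : 1 < q) (hq2 : q < 2) {x : ℝ} {d : ℕ → ℕ}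
    (hd : IsExpansion q x d) (hu : ∀ e, IsExpansion q x e → e = d)
    {n : ℕ} (hn : d n = 0) : seqVal q (fun j => d (n + 1 + j)) < 1 := by
  obtain ⟨hd1, hdx⟩ := hd
  by_contra h
  push_neg at h
  set t := seqVal q (fun j => d (n + 1 + j)) with ht
  have htail : ∀ i, d (n + 1 + i) ≤ 1 := fun i => hd1 _
  have htle : t ≤ 1/(q-1) := seqVal_le hq htail
  have hmem : t - 1 ∈ Set.Icc 0 (1/(q-1)) := ⟨by linarith, by linarith⟩
  obtain ⟨hg1, hgv⟩ := greedy_isExpansion hq hq2 hmem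
  set g := gDig q (t-1)
  set e := modSeq d n 1 g with he
  have hev : seqVal q e = x := by
    rw [modSeq_val hq hd1 (le_refl 1) hg1, ← hgv, hdx, seqVal_shift hq hd1 (n+1),
      Finset.sum_range_succ, hn]
    push_cast
    ring
  have := hu e ⟨modSeq_le n 1 hd1 (by norm_num) hg1, hev.symm⟩
  have hen : e n = 1 := by rw [he]; unfold modSeq; rw [if_neg (by omega), if_pos rfl]
  rw [this, hn] at hen
  exact absurd hen (by norm_num)

/-- If `d` is the unique expansion of `x` and `d n = 1`, the tail is `> (2-q)/(q-1)`. -/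
lemma cond_one (hq : 1 < q) (hq2 : q < 2) {x : ℝ} {d : ℕ → ℕ}
    (hd : IsExpansion q x d) (hu : ∀ e, IsExpansion q x e → e = d)
    {n : ℕ} (hn : d n = 1) : (2-q)/(q-1) < seqVal q (fun j => d (n + 1 + j)) := by
  obtain ⟨hd1, hdx⟩ := hd
  by_contra h
  push_neg at h
  set t := seqVal q (fun j => d (n + 1 + j)) with ht
  have htail : ∀ i, d (n + 1 + i) ≤ 1 := fun i => hd1 _
  have ht0 : 0 ≤ t := seqVal_nonneg hq _
  have hkey : (2-q)/(q-1) + 1 = 1/(q-1) := by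
    have : q - 1 ≠ 0 := by linarith
    field_simp
    norm_num
  have hmem : 1 + t ∈ Set.Icc 0 (1/(q-1)) := ⟨by linarith, by linarith⟩
  obtain ⟨hg1, hgv⟩ := greedy_isExpansion hq hq2 hmem
  set g := gDig q (1+t)
  set e := modSeq d n 0 g with he
  have hev : seqVal q e = x := by
    rw [modSeq_val hq hd1 (by norm_num) hg1, ← hgv, hdx, seqVal_shift hq hd1 (n+1),
      Finset.sum_range_succ, hn]
    push_cast
    ring
  have := hu e ⟨modSeq_le n 0 hd1 (by norm_num) hg1, hev.symm⟩
  have hen : e n = 0 := by rw [he]; unfold modSeq; rw [if_neg (by omega), if_pos rfl]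
  rw [this, hn] at hen
  exact absurd hen (by norm_num)
lemma key_lemma (hq : 1 < q) (hq2 : q < 2) (hqg : q^2 ≤ q + 1) {x : ℝ}
    (hx0 : 0 < x) (hx1 : x < 1) : ¬ HasUniqueExpansion q x := by
  rintro ⟨d, hd, hu'⟩
  have hu : ∀ e, IsExpansion q x e → e = d := fun e he => hu' e he
  have hd1 := hd.1
  have hdx := hd.2
  have hq0 : 0 < q := by linarith
  have hq1 : 0 < q - 1 := by linarith
  have hgt1 : 1 < 1/(q-1) := by rw [lt_div_iff₀ hq1]; linarith
  -- a 1 is always followed by a 1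
  have step3 : ∀ n, d n = 1 → d (n+1) = 1 := by
    intro n h1
    by_contra h0'
    have h0 : d (n+1) = 0 := by have := hd1 (n+1); omega
    have hA := cond_zero hq hq2 hd hu h0
    have hB := cond_one hq hq2 hd hu h1
    have htail : ∀ i, d (n + 1 + i) ≤ 1 := fun i => hd1 _
    have hfun : (fun j => (fun i => d (n + 1 + i)) (1 + j)) = fun j => d (n + 1 + 1 + j) := by
      funext j
      simp only []
      congr 1
      omega
    have hrel : seqVal q (fun j => d (n + 1 + j))
        = (d (n+1) : ℝ)/q + seqVal q (fun j => d (n + 1 + 1 + j)) / q := by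
      rw [seqVal_shift hq htail 1, hfun, Finset.sum_range_one, pow_one]
    rw [h0] at hrel
    have htnn : 0 ≤ seqVal q (fun j => d (n + 1 + 1 + j)) := seqVal_nonneg hq _
    have hlt : seqVal q (fun j => d (n + 1 + j)) < 1/q := by
      rw [hrel]
      push_cast
      rw [zero_div, zero_add, div_lt_div_iff_of_pos_right hq0]
      exact hA
    have hge : 1/q ≤ (2-q)/(q-1) := by
      rw [div_le_div_iff₀ hq0 hq1]
      nlinarith
    linarith
  -- there is a 1 somewhere
  have hex : ∃ n, d n = 1 := by
    by_contra hno
    push_neg at hno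
    have hz : ∀ n, d n = 0 := fun n => by have := hd1 n; have := hno n; omega
    have : seqVal q d = 0 := by
      unfold seqVal
      have h0 : ∀ i : ℕ, (d i : ℝ)/q^(i+1) = 0 := fun i => by rw [hz i]; simp
      rw [tsum_congr h0, tsum_zero]
    rw [this] at hdx
    linarith
  classical
  have hones : ∀ k, Nat.find hex ≤ k → d k = 1 := by
    intro k hk
    induction k, hk using Nat.le_induction with
    | base => exact Nat.find_spec hex
    | succ k hk ih => exact step3 k ih
  by_cases h0 : Nat.find hex = 0
  · have : seqVal q d = 1/(q-1) := by
      rw [← seqVal_ones hq]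
      apply tsum_congr
      intro i
      have : d i = 1 := hones i (by omega)
      simp [this]
    rw [this] at hdx
    linarith
  · set m := Nat.find hex - 1 with hm
    have hm0 : d m = 0 := by
      have h1 := Nat.find_min hex (show m < Nat.find hex by omega)
      have := hd1 m
      omega
    have hA := cond_zero hq hq2 hd hu hm0
    have : seqVal q (fun j => d (m + 1 + j)) = 1/(q-1) := by
      rw [← seqVal_ones hq]
      apply tsum_congr
      intro i
      have : d (m + 1 + i) = 1 := hones _ (by omega)
      simp [this]
    linarith


/-- `D_1 ∩ (0, 1) = ∅`. -/
theorem D_one_inter_Ioo (τ : ℕ → ℕ) (hτ : IsThueMorse τ)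
    (Q : ℕ → ℝ) (hQ : IsBaseSeq τ Q) :
    D Q 1 ∩ Set.Ioo 0 1 = ∅ := by
  ext x
  simp only [Set.mem_inter_iff, Set.mem_empty_iff_false, iff_false, not_and]
  intro hD hx
  obtain ⟨hQ0, hQn⟩ := hQ
  obtain ⟨hQ1a, hQ1b, hQ1eq⟩ := hQn 1 le_rfl
  obtain ⟨ht0, ht2n, ht2n1⟩ := hτ
  have hτ1 : τ 1 = 1 := by have := ht2n1 0; simp [ht0] at this; omega
  have hτ2 : τ 2 = 1 := by have h := ht2n 1; rw [show 2*1 = 2 from rfl] at h; omega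
  have hQ1pos : (0:ℝ) < Q 1 := by linarith
  have hQsq : (Q 1)^2 = Q 1 + 1 := by
    rw [show (2:ℕ)^1 = 2 from rfl, Finset.sum_range_succ, Finset.sum_range_one,
      hτ1, hτ2] at hQ1eq
    have h2 : (Q 1) ^ (0+1) = Q 1 := pow_one _
    rw [h2] at hQ1eq
    push_cast at hQ1eq
    field_simp at hQ1eq
    nlinarith [hQ1eq]
  simp only [D, Set.mem_iUnion, exists_prop] at hD
  obtain ⟨q, hqm, hxU⟩ := hD
  have hq1 : 1 < q := by
    have := hqm.1
    rwa [show (1:ℕ) - 1 = 0 from rfl, hQ0] at this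
  have hqle : q ≤ Q 1 := hqm.2
  have hq2 : q < 2 := lt_of_le_of_lt hqle hQ1b
  have hqsq : q^2 ≤ q + 1 := by nlinarith [hQsq, (Q 1 - q) * (q + Q 1 - 1)]
  exact key_lemma hq1 hq2 hqsq hx.1 hx.2 hxU.2
end
end

section
/- The set (0, 1/(q_G²(q_G² − 1))) ∪ ∪_{k=0}^{2} ( q_KL^{1−k}/(q_KL² − 1), q_G^{1−k}/(q_G² − 1) ) is contained in (∪_{n=2}^∞ D_n) ∩ (0, 1). (Here q^{1−k}/(q² − 1) is the value ((0^k(10)^∞))_q and 1/(q_G²(q_G² − 1)) is the value ((0^3(10)^∞))_{q_G}.) -/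
open Filter Topology

noncomputable section

namespace ST13Aux

/-- `0^k (10)^∞` as a 0-indexed digit sequence. -/
def dseq (k : ℕ) : ℕ → ℕ := fun i => if k ≤ i ∧ (i - k) % 2 = 0 then 1 else 0

def prev : ℕ → ℕ
  | 0 => 1
  | k + 1 => k

lemma dseq_le (k i : ℕ) : dseq k i ≤ 1 := by unfold dseq; split <;> omega

lemma dseq_shift (k i : ℕ) : dseq k (i + 1) = dseq (prev k) i := by
  cases k <;> simp only [prev] <;> simp only [dseq] <;> split_ifs <;> omega

lemma summable_aux {q : ℝ} (hq : 1 < q) (c : ℕ → ℕ) (hc : ∀ i, c i ≤ 1) :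
    Summable (fun i : ℕ => (c i : ℝ) / q ^ (i + 1)) := by
  have h0 : 0 < q := lt_trans one_pos hq
  have hgeo : Summable (fun i : ℕ => (1 / q) ^ (i + 1)) := by
    have : Summable (fun i : ℕ => (1 / q) ^ i) :=
      summable_geometric_of_lt_one (by positivity) (by rw [div_lt_one h0]; exact hq)
    simpa [pow_succ'] using this.mul_left (1 / q)
  refine Summable.of_nonneg_of_le (fun i => by positivity) (fun i => ?_) hgeo
  rw [one_div, inv_pow, ← one_div]
  gcongr
  exact_mod_cast hc i

lemma tsum_geom_aux {q : ℝ} (hq : 1 < q) : ∑' i : ℕ, (1 / q) ^ (i + 1) = 1 / (q - 1) := by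
  have h0 : 0 < q := lt_trans one_pos hq
  have h1 : (1 : ℝ) / q < 1 := by rw [div_lt_one h0]; exact hq
  have := tsum_geometric_of_lt_one (by positivity : (0:ℝ) ≤ 1 / q) h1
  calc ∑' i : ℕ, (1 / q) ^ (i + 1) = ∑' i : ℕ, (1 / q) * (1 / q) ^ i := by
        congr 1; funext i; rw [pow_succ']
    _ = (1 / q) * (1 - 1 / q)⁻¹ := by rw [tsum_mul_left, this]
    _ = 1 / (q - 1) := by field_simp

lemma seqVal_nonneg {q : ℝ} (hq : 0 < q) (c : ℕ → ℕ) : 0 ≤ seqVal q c :=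
  tsum_nonneg fun i => by positivity

lemma seqVal_le {q : ℝ} (hq : 1 < q) (c : ℕ → ℕ) (hc : ∀ i, c i ≤ 1) :
    seqVal q c ≤ 1 / (q - 1) := by
  have h0 : 0 < q := lt_trans one_pos hq
  rw [← tsum_geom_aux hq]
  refine Summable.tsum_le_tsum (fun i => ?_) (summable_aux hq c hc) ?_
  · rw [one_div, inv_pow, ← one_div]
    gcongr
    exact_mod_cast hc i
  · have : Summable (fun i : ℕ => (1 / q) ^ i) :=
      summable_geometric_of_lt_one (by positivity) (by rw [div_lt_one h0]; exact hq)
    simpa [pow_succ'] using this.mul_left (1 / q)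

lemma seqVal_step {q : ℝ} (hq : 1 < q) (c : ℕ → ℕ) (hc : ∀ i, c i ≤ 1) :
    seqVal q c = (c 0 : ℝ) / q + (1 / q) * seqVal q (fun i => c (i + 1)) := by
  have hs := summable_aux hq c hc
  have h0 : (0:ℝ) < q := lt_trans one_pos hq
  rw [seqVal, Summable.tsum_eq_zero_add hs]
  congr 1
  · norm_num
  · rw [seqVal, ← tsum_mul_left]
    congr 1; funext i
    rw [pow_succ]
    ring

lemma sv_dseq {q : ℝ} (hq : 1 < q) (k : ℕ) :
    seqVal q (dseq k) = q / (q ^ k * (q ^ 2 - 1)) := by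
  have h0 : (0:ℝ) < q := lt_trans one_pos hq
  have hq2 : q ^ 2 - 1 > 0 := by nlinarith
  have hshift : ∀ m, (fun i => dseq m (i + 1)) = dseq (prev m) :=
    fun m => funext fun i => dseq_shift m i
  induction k with
  | zero =>
      have h0' := seqVal_step hq (dseq 0) (dseq_le 0)
      have h1' := seqVal_step hq (dseq 1) (dseq_le 1)
      rw [hshift 0] at h0'
      rw [hshift 1] at h1'
      simp only [prev] at h0' h1'
      have hd0 : dseq 0 0 = 1 := by decide
      have hd1 : dseq 1 0 = 0 := by decide
      rw [hd0] at h0'; rw [hd1] at h1'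
      rw [h1'] at h0'
      have hne : q ≠ 0 := ne_of_gt h0
      have hne2 : q ^ 2 - 1 ≠ 0 := ne_of_gt hq2
      field_simp at h0' ⊢
      push_cast at h0'
      nlinarith [h0']
  | succ k ih =>
      have h' := seqVal_step hq (dseq (k + 1)) (dseq_le (k + 1))
      rw [hshift (k + 1)] at h'
      simp only [prev] at h'
      have hd : dseq (k + 1) 0 = 0 := by simp [dseq]
      rw [hd, ih] at h'
      rw [h']
      have hne : q ≠ 0 := ne_of_gt h0
      have hne2 : q ^ 2 - 1 ≠ 0 := ne_of_gt hq2
      field_simp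
      ring

lemma sqrt5_lt : Real.sqrt 5 < 2.24 := by
  nlinarith [Real.sq_sqrt (by norm_num : (5:ℝ) ≥ 0), Real.sqrt_nonneg (5:ℝ)]

lemma sqrt5_gt : (2:ℝ) < Real.sqrt 5 := by
  nlinarith [Real.sq_sqrt (by norm_num : (5:ℝ) ≥ 0), Real.sqrt_nonneg (5:ℝ)]

lemma qG_sq : qG ^ 2 = qG + 1 := by
  have := Real.sq_sqrt (by norm_num : (5:ℝ) ≥ 0)
  unfold qG; nlinarith [this]

lemma one_lt_qG : 1 < qG := by unfold qG; nlinarith [sqrt5_gt]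

lemma qG_lt' : qG < 81 / 50 := by unfold qG; nlinarith [sqrt5_lt]

lemma qG_lt_c : qG < 357 / 200 := lt_trans qG_lt' (by norm_num)

lemma quad_pos {q : ℝ} (h : qG < q) : 0 < q ^ 2 - q - 1 := by
  nlinarith [qG_sq, one_lt_qG,
    mul_pos (sub_pos.mpr h) (show (0:ℝ) < q + qG - 1 by nlinarith [one_lt_qG])]

lemma head {q : ℝ} (hG : qG < q) (k : ℕ) (e : ℕ → ℕ) (he : ∀ i, e i ≤ 1)
    (hv : seqVal q e = seqVal q (dseq k)) :
    e 0 = dseq k 0 ∧ seqVal q (fun i => e (i + 1)) = seqVal q (dseq (prev k)) := by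
  have hq : 1 < q := lt_trans one_lt_qG hG
  have h0 : (0:ℝ) < q := lt_trans one_pos hq
  have hquad := quad_pos hG
  have hq2 : (0:ℝ) < q ^ 2 - 1 := by nlinarith
  have hB0 : 0 ≤ seqVal q (fun i => e (i + 1)) := seqVal_nonneg h0 _
  have hB1 : seqVal q (fun i => e (i + 1)) ≤ 1 / (q - 1) := seqVal_le hq _ (fun i => he _)
  have hstep_e := seqVal_step hq e he
  have hstep_d := seqVal_step hq (dseq k) (dseq_le k)
  rw [show (fun i => dseq k (i + 1)) = dseq (prev k) from funext fun i => dseq_shift k i] at hstep_d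
  set B := seqVal q (fun i => e (i + 1)) with hBdef
  set Dv := seqVal q (dseq (prev k)) with hDdef
  have hDv : Dv = q / (q ^ (prev k) * (q ^ 2 - 1)) := sv_dseq hq _
  have hDpos : 0 ≤ Dv := seqVal_nonneg h0 _
  have hDle : Dv ≤ q / (q ^ 2 - 1) := by
    rw [hDv]
    have h1 : (1:ℝ) ≤ q ^ (prev k) := one_le_pow₀ (le_of_lt hq)
    rw [div_le_div_iff₀ (by positivity) hq2]
    nlinarith [mul_le_mul_of_nonneg_right h1 (le_of_lt (mul_pos hq2 h0))]
  have heq : (e 0 : ℝ) + B = (dseq k 0 : ℝ) + Dv := by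
    rw [hstep_e, hstep_d] at hv
    have hne : q ≠ 0 := ne_of_gt h0
    field_simp at hv
    linarith [hv]
  cases k with
  | zero =>
      have hd0 : dseq 0 0 = 1 := by decide
      have hDv1 : Dv = q / (q ^ 1 * (q ^ 2 - 1)) := hDv
      have he0 : e 0 = 1 := by
        by_contra h
        have h00 : e 0 = 0 := by have := he 0; omega
        rw [h00, hd0] at heq
        have hDvv : Dv * (q ^ 2 - 1) = 1 := by
          rw [hDv1]; field_simp
        have hB : B * (q - 1) ≤ 1 := by
          rw [← le_div_iff₀ (by linarith)]; linarith [hB1]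
        push_cast at heq
        nlinarith [heq, hDvv, hB, hquad, hq]
      refine ⟨by rw [he0, hd0], ?_⟩
      rw [he0, hd0] at heq
      push_cast at heq
      linarith [heq]
  | succ k =>
      have hd0 : dseq (k + 1) 0 = 0 := by simp [dseq]
      have hDlt1 : Dv < 1 := by
        apply lt_of_le_of_lt hDle
        rw [div_lt_one hq2]; nlinarith
      have he0 : e 0 = 0 := by
        by_contra h
        have h01 : e 0 = 1 := by have := he 0; omega
        rw [h01, hd0] at heq
        push_cast at heq
        nlinarith [heq, hB0]
      refine ⟨by rw [he0, hd0], ?_⟩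
      rw [he0, hd0] at heq
      push_cast at heq
      linarith [heq]

lemma unique_exp {q : ℝ} (hG : qG < q) (k : ℕ) (e : ℕ → ℕ) (he : ∀ i, e i ≤ 1)
    (hv : seqVal q e = seqVal q (dseq k)) : e = dseq k := by
  have key : ∀ n (k : ℕ) (e : ℕ → ℕ), (∀ i, e i ≤ 1) →
      seqVal q e = seqVal q (dseq k) → e n = dseq k n := by
    intro n
    induction n with
    | zero => intro k e he hv; exact (head hG k e he hv).1
    | succ n ih =>
        intro k e he hv
        have h := head hG k e he hv
        have := ih (prev k) (fun i => e (i + 1)) (fun i => he _) h.2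
        rw [dseq_shift k n]
        exact this
  funext n
  exact key n k e he hv

lemma div_pow_mono {a q r : ℝ} (ha : 0 ≤ a) (h1 : 0 < q) (h : q ≤ r) (n : ℕ) :
    a / r ^ n ≤ a / q ^ n := by
  gcongr

lemma tau_le_one {τ : ℕ → ℕ} (hτ : IsThueMorse τ) : ∀ n, τ n ≤ 1 := by
  obtain ⟨h0, he, ho⟩ := hτ
  intro n
  induction n using Nat.strong_induction_on with
  | _ n ih =>
      rcases Nat.even_or_odd n with ⟨m, hm⟩ | ⟨m, hm⟩
      · rcases Nat.eq_zero_or_pos m with rfl | hm0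
        · have : n = 0 := by omega
          rw [this, h0]; omega
        · have hn : n = 2 * m := by omega
          rw [hn, he m]
          exact ih m (by omega)
      · have hn : n = 2 * m + 1 := by omega
        rw [hn, ho m]
        omega

lemma tau_vals {τ : ℕ → ℕ} (hτ : IsThueMorse τ) :
    τ 1 = 1 ∧ τ 2 = 1 ∧ τ 3 = 0 ∧ τ 4 = 1 ∧ τ 5 = 0 ∧ τ 6 = 0 ∧ τ 7 = 1 ∧
    τ 8 = 1 ∧ τ 9 = 0 ∧ τ 10 = 0 ∧ τ 11 = 1 := by
  obtain ⟨h0, he, ho⟩ := hτ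
  have t1 : τ 1 = 1 := by have h := ho 0; norm_num at h; omega
  have t2 : τ 2 = 1 := by have h := he 1; norm_num at h; omega
  have t3 : τ 3 = 0 := by have h := ho 1; norm_num at h; omega
  have t4 : τ 4 = 1 := by have h := he 2; norm_num at h; omega
  have t5 : τ 5 = 0 := by have h := ho 2; norm_num at h; omega
  have t6 : τ 6 = 0 := by have h := he 3; norm_num at h; omega
  have t7 : τ 7 = 1 := by have h := ho 3; norm_num at h; omega
  have t8 : τ 8 = 1 := by have h := he 4; norm_num at h; omega
  have t9 : τ 9 = 0 := by have h := ho 4; norm_num at h; omega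
  have t10 : τ 10 = 0 := by have h := he 5; norm_num at h; omega
  have t11 : τ 11 = 1 := by have h := ho 5; norm_num at h; omega
  exact ⟨t1, t2, t3, t4, t5, t6, t7, t8, t9, t10, t11⟩

lemma qKL_gt {τ : ℕ → ℕ} (hτ : IsThueMorse τ) {qKL : ℝ} (hKL : IsKL τ qKL) :
    357 / 200 < qKL := by
  obtain ⟨h1, h2, hsum⟩ := hKL
  by_contra hcon
  push_neg at hcon
  have hτ1 := tau_le_one hτ
  have hsummable := summable_aux h1 (fun i => τ (i + 1)) (fun i => hτ1 _)
  have hpart : ∑ i ∈ Finset.range 11, (τ (i + 1) : ℝ) / qKL ^ (i + 1) ≤ 1 := by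
    rw [hsum]
    exact Summable.sum_le_tsum _ (fun i _ => by positivity) hsummable
  have hlow : ∀ i ∈ Finset.range 11,
      (τ (i + 1) : ℝ) / (357 / 200 : ℝ) ^ (i + 1) ≤ (τ (i + 1) : ℝ) / qKL ^ (i + 1) :=
    fun i _ => div_pow_mono (Nat.cast_nonneg _) (by linarith) hcon _
  have hsum2 : ∑ i ∈ Finset.range 11, (τ (i + 1) : ℝ) / (357 / 200 : ℝ) ^ (i + 1) ≤ 1 :=
    le_trans (Finset.sum_le_sum hlow) hpart
  obtain ⟨t1, t2, t3, t4, t5, t6, t7, t8, t9, t10, t11⟩ := tau_vals hτ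
  rw [Finset.sum_range_succ, Finset.sum_range_succ, Finset.sum_range_succ,
    Finset.sum_range_succ, Finset.sum_range_succ, Finset.sum_range_succ,
    Finset.sum_range_succ, Finset.sum_range_succ, Finset.sum_range_succ,
    Finset.sum_range_succ, Finset.sum_range_succ, Finset.sum_range_zero] at hsum2
  norm_num [t1, t2, t3, t4, t5, t6, t7, t8, t9, t10, t11] at hsum2

lemma Q1_eq {τ : ℕ → ℕ} (hτ : IsThueMorse τ) {Q : ℕ → ℝ} (hQ : IsBaseSeq τ Q) :
    Q 1 = qG := by
  obtain ⟨-, h⟩ := hQ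
  obtain ⟨h1, h2, hsum⟩ := h 1 le_rfl
  obtain ⟨t1, t2, -⟩ := tau_vals hτ
  rw [show (2:ℕ)^1 = 2 from rfl, Finset.sum_range_succ, Finset.sum_range_succ,
    Finset.sum_range_zero, t1, t2] at hsum
  have hne : Q 1 ≠ 0 := by linarith
  have hQ1sq : Q 1 ^ 2 = Q 1 + 1 := by
    field_simp at hsum
    have h4 : Q 1 * (Q 1 ^ 2 - Q 1 - 1) = 0 := by linear_combination hsum
    rcases mul_eq_zero.mp h4 with h' | h'
    · exact absurd h' hne
    · linarith
  have hfac : (Q 1 - qG) * (Q 1 + qG - 1) = 0 := by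
    linear_combination hQ1sq - qG_sq
  rcases mul_eq_zero.mp hfac with h' | h'
  · linarith
  · nlinarith [one_lt_qG]

lemma exists_n {τ : ℕ → ℕ} (hτ : IsThueMorse τ) {qKL : ℝ} (hKL : IsKL τ qKL)
    {Q : ℕ → ℝ} (hQ : IsBaseSeq τ Q) {q : ℝ} (hG : qG < q) (hqKL : q < qKL) :
    ∃ n, 2 ≤ n ∧ Q (n - 1) < q ∧ q ≤ Q n := by
  have hq1 : 1 < q := lt_trans one_lt_qG hG
  have hq0 : (0:ℝ) < q := lt_trans one_pos hq1
  have hτ1 := tau_le_one hτ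
  have t1 : τ 1 = 1 := (tau_vals hτ).1
  obtain ⟨hKL1, hKL2, hKLsum⟩ := hKL
  have hsummq := summable_aux hq1 (fun i => τ (i + 1)) (fun i => hτ1 _)
  have hsummKL := summable_aux hKL1 (fun i => τ (i + 1)) (fun i => hτ1 _)
  have hT : (1:ℝ) < ∑' i : ℕ, (τ (i + 1) : ℝ) / q ^ (i + 1) := by
    rw [hKLsum]
    apply Summable.tsum_lt_tsum (i := 0)
      (fun i => div_pow_mono (Nat.cast_nonneg _) hq0 hqKL.le _) ?_ hsummKL hsummq
    simp only [zero_add, pow_one, t1, Nat.cast_one]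
    exact one_div_lt_one_div_of_lt hq0 hqKL
  have htend := hsummq.hasSum.tendsto_sum_nat
  obtain ⟨N, hN⟩ := (htend.eventually (eventually_gt_nhds hT)).exists
  set m := max N 1 with hm
  have hm1 : 1 ≤ m := le_max_right _ _
  have hNm : N ≤ 2 ^ m := le_trans (le_max_left N 1) (Nat.le_of_lt (Nat.lt_two_pow_self (n := m)))
  have hbig : 1 < ∑ i ∈ Finset.range (2 ^ m), (τ (i + 1) : ℝ) / q ^ (i + 1) := by
    refine lt_of_lt_of_le hN ?_
    exact Finset.sum_le_sum_of_subset_of_nonneg (Finset.range_subset_range.mpr hNm)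
      (fun i _ _ => by positivity)
  have hqQm : q ≤ Q m := by
    by_contra hcon
    push_neg at hcon
    obtain ⟨hQm1, hQm2, hQmsum⟩ := hQ.2 m hm1
    have hQm0 : (0:ℝ) < Q m := by linarith
    have hlt : ∑ i ∈ Finset.range (2 ^ m), (τ (i + 1) : ℝ) / q ^ (i + 1) <
        ∑ i ∈ Finset.range (2 ^ m), (τ (i + 1) : ℝ) / (Q m) ^ (i + 1) := by
      apply Finset.sum_lt_sum
        (fun i _ => div_pow_mono (Nat.cast_nonneg _) hQm0 hcon.le _)
      refine ⟨0, Finset.mem_range.mpr (by positivity), ?_⟩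
      simp only [zero_add, pow_one, t1, Nat.cast_one]
      exact one_div_lt_one_div_of_lt hQm0 hcon
    rw [← hQmsum] at hlt
    linarith
  have hex : ∃ n, 1 ≤ n ∧ q ≤ Q n := ⟨m, hm1, hqQm⟩
  classical
  obtain ⟨hn1, hnq⟩ := Nat.find_spec hex
  have hn2 : 2 ≤ Nat.find hex := by
    by_contra hcon
    push_neg at hcon
    have hQ1 : Q 1 = qG := Q1_eq hτ ⟨hQ.1, hQ.2⟩
    have h1' : q ≤ Q 1 := by
      rw [show (1:ℕ) = Nat.find hex by omega]
      exact hnq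
    rw [hQ1] at h1'
    linarith
  refine ⟨Nat.find hex, hn2, ?_, hnq⟩
  have hmin := Nat.find_min hex (show Nat.find hex - 1 < Nat.find hex by omega)
  push_neg at hmin
  exact hmin (by omega)

/-- `g q k = ((0^k(10)^∞))_q`. -/
def g (q : ℝ) (k : ℕ) : ℝ := q / (q ^ k * (q ^ 2 - 1))

lemma core {qKL : ℝ} (hKL : 357 / 200 < qKL) :
    ∀ j : ℕ, qG ^ (j + 3) * (qG ^ 2 - 1) < qKL ^ (j + 2) * (qKL ^ 2 - 1) := by
  have h1 : (1:ℝ) < qG := one_lt_qG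
  have hGK : qG < qKL := lt_trans qG_lt' (by linarith)
  have h0G : (0:ℝ) < qG := by linarith
  have h0K : (0:ℝ) < qKL := by linarith
  intro j
  induction j with
  | zero =>
      have hG4 : qG ^ 3 * (qG ^ 2 - 1) = 3 * qG + 2 := by
        linear_combination (qG^3 + qG^2 + qG + 2) * qG_sq
      have hsq : (0:ℝ) < qKL ^ 2 - (357/200) ^ 2 := by nlinarith [hKL]
      have hK2 : (357/200:ℝ) ^ 2 * ((357/200:ℝ) ^ 2 - 1) < qKL ^ 2 * (qKL ^ 2 - 1) := by
        nlinarith [mul_pos hsq (show (0:ℝ) < qKL ^ 2 + (357/200) ^ 2 - 1 by nlinarith [hKL])]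
      have : (3:ℝ) * qG + 2 < (357/200:ℝ) ^ 2 * ((357/200:ℝ) ^ 2 - 1) := by
        nlinarith [qG_lt']
      calc qG ^ (0 + 3) * (qG ^ 2 - 1) = 3 * qG + 2 := by rw [zero_add, hG4]
        _ < qKL ^ (0 + 2) * (qKL ^ 2 - 1) := by rw [zero_add]; linarith
  | succ j ih =>
      have hpos : (0:ℝ) < qG ^ (j + 3) * (qG ^ 2 - 1) := by
        have : (0:ℝ) < qG ^ 2 - 1 := by nlinarith
        positivity
      calc qG ^ (j + 1 + 3) * (qG ^ 2 - 1) = qG * (qG ^ (j + 3) * (qG ^ 2 - 1)) := by ring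
        _ < qKL * (qKL ^ (j + 2) * (qKL ^ 2 - 1)) := by
            apply mul_lt_mul' hGK.le ih hpos.le h0K |>.trans_le le_rfl
        _ = qKL ^ (j + 1 + 2) * (qKL ^ 2 - 1) := by ring

lemma overlap {qKL : ℝ} (hKL : 357 / 200 < qKL) (j : ℕ) :
    g qKL (j + 3) < g qG (j + 4) := by
  have h1 : (1:ℝ) < qG := one_lt_qG
  have hGK : qG < qKL := lt_trans qG_lt' (by linarith)
  have h0G : (0:ℝ) < qG := by linarith
  have h0K : (0:ℝ) < qKL := by linarith
  have hG2 : (0:ℝ) < qG ^ 2 - 1 := by nlinarith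
  have hK2 : (0:ℝ) < qKL ^ 2 - 1 := by nlinarith
  unfold g
  rw [div_lt_div_iff₀ (by positivity) (by positivity)]
  have hcore := core hKL j
  calc qKL * (qG ^ (j + 4) * (qG ^ 2 - 1)) = (qG * qKL) * (qG ^ (j + 3) * (qG ^ 2 - 1)) := by
        ring
    _ < (qG * qKL) * (qKL ^ (j + 2) * (qKL ^ 2 - 1)) := by
        apply mul_lt_mul_of_pos_left hcore (by positivity)
    _ = qG * (qKL ^ (j + 3) * (qKL ^ 2 - 1)) := by ring

lemma ivt {qKL : ℝ} (hGK : qG < qKL) (k : ℕ) {x : ℝ}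
    (h1 : g qKL k < x) (h2 : x < g qG k) :
    ∃ q, qG < q ∧ q < qKL ∧ g q k = x := by
  have hcont : ContinuousOn (fun q => g q k) (Set.Icc qG qKL) := by
    apply ContinuousOn.div continuousOn_id
    · fun_prop
    · intro q hq
      have hq1 : 1 < q := lt_of_lt_of_le one_lt_qG hq.1
      have hd : (0:ℝ) < q ^ k * (q ^ 2 - 1) := by
        have : (0:ℝ) < q ^ 2 - 1 := by nlinarith
        positivity
      exact ne_of_gt hd
  have hsub := intermediate_value_Ioo' (le_of_lt hGK) hcont
  obtain ⟨q, hq, hfq⟩ := hsub ⟨h1, h2⟩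
  exact ⟨q, hq.1, hq.2, hfq⟩

lemma mem_Uset {q : ℝ} (hG : qG < q) (k : ℕ) : g q k ∈ Uset q := by
  have hq : 1 < q := lt_trans one_lt_qG hG
  have h0 : (0:ℝ) < q := lt_trans one_pos hq
  have hq2 : (0:ℝ) < q ^ 2 - 1 := by nlinarith
  have hx : g q k = seqVal q (dseq k) := (sv_dseq hq k).symm
  refine ⟨⟨?_, ?_⟩, ⟨dseq k, ⟨dseq_le k, hx⟩, ?_⟩⟩
  · exact div_nonneg h0.le (le_of_lt (mul_pos (pow_pos h0 k) hq2))
  · rw [hx]; exact seqVal_le hq _ (dseq_le k)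
  · rintro e ⟨he, hve⟩
    exact unique_exp hG k e he (hve.symm.trans hx)

lemma mem_big {τ : ℕ → ℕ} (hτ : IsThueMorse τ) {qKL : ℝ} (hKL : IsKL τ qKL)
    {Q : ℕ → ℝ} (hQ : IsBaseSeq τ Q) {q : ℝ} (hG : qG < q) (hqKL : q < qKL) (k : ℕ) :
    g q k ∈ (⋃ n ∈ {n : ℕ | 2 ≤ n}, D Q n) ∩ Set.Ioo 0 1 := by
  obtain ⟨n, hn2, hlt, hle⟩ := exists_n hτ hKL hQ hG hqKL
  have hq : 1 < q := lt_trans one_lt_qG hG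
  have h0 : (0:ℝ) < q := lt_trans one_pos hq
  have hq2 : (0:ℝ) < q ^ 2 - 1 := by nlinarith
  constructor
  · apply Set.mem_biUnion hn2
    exact Set.mem_biUnion (⟨hlt, hle⟩ : q ∈ Set.Ioc (Q (n - 1)) (Q n)) (mem_Uset hG k)
  · constructor
    · exact div_pos h0 (mul_pos (pow_pos h0 k) hq2)
    · have h1 : g q k ≤ q / (1 * (q ^ 2 - 1)) := by
        unfold g
        gcongr
        exact one_le_pow₀ hq.le
      have h2 : q / (q ^ 2 - 1) < 1 := by
        rw [div_lt_one hq2]; nlinarith [quad_pos hG]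
      rw [one_mul] at h1
      linarith

end ST13Aux

/-- `(0, ((0^3(10)^∞))_{q_G}) ∪ ⋃_{k=0}^2 (((0^k(10)^∞))_{q_KL}, ((0^k(10)^∞))_{q_G})`
is contained in `(⋃_{n=2}^∞ D_n) ∩ (0,1)`. -/
theorem subset_union_D (τ : ℕ → ℕ) (hτ : IsThueMorse τ) (qKL : ℝ) (hKL : IsKL τ qKL)
    (Q : ℕ → ℝ) (hQ : IsBaseSeq τ Q) :
    (Set.Ioo 0 (1 / (qG ^ 2 * (qG ^ 2 - 1))) ∪
     Set.Ioo (qKL / (qKL ^ 2 - 1)) (qG / (qG ^ 2 - 1)) ∪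
     Set.Ioo (1 / (qKL ^ 2 - 1)) (1 / (qG ^ 2 - 1)) ∪
     Set.Ioo (1 / (qKL * (qKL ^ 2 - 1))) (1 / (qG * (qG ^ 2 - 1)))) ⊆
      (⋃ n ∈ {n : ℕ | 2 ≤ n}, D Q n) ∩ Set.Ioo 0 1 := by
  classical
  intro x hx
  have hKLgt : 357 / 200 < qKL := ST13Aux.qKL_gt hτ hKL
  have hKL1 : 1 < qKL := hKL.1
  have hGK : qG < qKL := lt_trans ST13Aux.qG_lt_c hKLgt
  have h1G : 1 < qG := ST13Aux.one_lt_qG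
  have h0G : (0:ℝ) < qG := by linarith
  have h0K : (0:ℝ) < qKL := by linarith
  have hK2 : (0:ℝ) < qKL ^ 2 - 1 := by nlinarith
  have hG2 : (0:ℝ) < qG ^ 2 - 1 := by nlinarith
  have hneK : qKL ≠ 0 := ne_of_gt h0K
  have hneG : qG ≠ 0 := ne_of_gt h0G
  have eK0 : qKL / (qKL ^ 2 - 1) = ST13Aux.g qKL 0 := by
    unfold ST13Aux.g; rw [pow_zero, one_mul]
  have eG0 : qG / (qG ^ 2 - 1) = ST13Aux.g qG 0 := by
    unfold ST13Aux.g; rw [pow_zero, one_mul]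
  have eK1 : 1 / (qKL ^ 2 - 1) = ST13Aux.g qKL 1 := by
    unfold ST13Aux.g; rw [pow_one]; field_simp
  have eG1 : 1 / (qG ^ 2 - 1) = ST13Aux.g qG 1 := by
    unfold ST13Aux.g; rw [pow_one]; field_simp
  have eK2 : 1 / (qKL * (qKL ^ 2 - 1)) = ST13Aux.g qKL 2 := by
    unfold ST13Aux.g; field_simp
  have eG2 : 1 / (qG * (qG ^ 2 - 1)) = ST13Aux.g qG 2 := by
    unfold ST13Aux.g; field_simp
  have eG3 : 1 / (qG ^ 2 * (qG ^ 2 - 1)) = ST13Aux.g qG 3 := by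
    unfold ST13Aux.g; field_simp
  rcases hx with ((h | h) | h) | h
  · -- the interval (0, ((0^3(10)^∞))_{qG})
    obtain ⟨hx0, hxu⟩ := h
    rw [eG3] at hxu
    have hexP : ∃ j, ST13Aux.g qKL (j + 3) < x := by
      obtain ⟨j, hj⟩ := pow_unbounded_of_one_lt (qKL / (x * (qKL ^ 2 - 1))) hKL1
      refine ⟨j, ?_⟩
      have hpow : qKL ^ j ≤ qKL ^ (j + 3) :=
        pow_le_pow_right₀ hKL1.le (by omega)
      have hj' : qKL < qKL ^ (j + 3) * (x * (qKL ^ 2 - 1)) :=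
        (div_lt_iff₀ (by positivity)).mp (lt_of_lt_of_le hj hpow)
      unfold ST13Aux.g
      rw [div_lt_iff₀ (by positivity)]
      have hring : qKL ^ (j + 3) * (x * (qKL ^ 2 - 1)) =
          x * (qKL ^ (j + 3) * (qKL ^ 2 - 1)) := by ring
      linarith [hj', hring.symm.le, hring.le]
    set j0 := Nat.find hexP with hj0def
    have hPj0 : ST13Aux.g qKL (j0 + 3) < x := Nat.find_spec hexP
    have hupper : x < ST13Aux.g qG (j0 + 3) := by
      rcases Nat.eq_zero_or_pos j0 with hz | hp
      · rw [hz]; exact hxu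
      · have hnot := Nat.find_min hexP (show j0 - 1 < j0 by omega)
        push_neg at hnot
        have hov := ST13Aux.overlap hKLgt (j0 - 1)
        have heq4 : j0 - 1 + 4 = j0 + 3 := by omega
        rw [heq4] at hov
        exact lt_of_le_of_lt hnot hov
    obtain ⟨q, hq1, hq2, hfq⟩ := ST13Aux.ivt hGK (j0 + 3) hPj0 hupper
    rw [← hfq]
    exact ST13Aux.mem_big hτ hKL hQ hq1 hq2 (j0 + 3)
  · obtain ⟨hl, hu⟩ := h
    rw [eK0] at hl; rw [eG0] at hu
    obtain ⟨q, hq1, hq2, hfq⟩ := ST13Aux.ivt hGK 0 hl hu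
    rw [← hfq]
    exact ST13Aux.mem_big hτ hKL hQ hq1 hq2 0
  · obtain ⟨hl, hu⟩ := h
    rw [eK1] at hl; rw [eG1] at hu
    obtain ⟨q, hq1, hq2, hfq⟩ := ST13Aux.ivt hGK 1 hl hu
    rw [← hfq]
    exact ST13Aux.mem_big hτ hKL hQ hq1 hq2 1
  · obtain ⟨hl, hu⟩ := h
    rw [eK2] at hl; rw [eG2] at hu
    obtain ⟨q, hq1, hq2, hfq⟩ := ST13Aux.ivt hGK 2 hl hu
    rw [← hfq]
    exact ST13Aux.mem_big hτ hKL hQ hq1 hq2 2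
end
end

section
/- Let x > 0 and n ≥ 1. Then q_s(x) ∈ (q_{n−1}, q_n] if and only if x ∈ D_n \ ∪_{k=1}^{n−1} D_k. -/
open Filter Topology

noncomputable section

namespace QsP

/-- Tail value of a digit sequence starting at index `m`. -/
def R (q : ℝ) (d : ℕ → ℕ) (m : ℕ) : ℝ := ∑' k : ℕ, (d (m + k) : ℝ) / q ^ (k + 1)

/-- Reflected digit sequence. -/
def refl (d : ℕ → ℕ) : ℕ → ℕ := fun i => 1 - d i

section RAPI

variable {q : ℝ} {d e : ℕ → ℕ} {m : ℕ}

lemma q0 (hq : 1 < q) : 0 < q := lt_trans one_pos hq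

lemma inv_lt (hq : 1 < q) : q⁻¹ < 1 := by
  rw [inv_lt_one_iff₀]; right; exact hq

lemma term_rw (hq : 1 < q) (x : ℝ) (k : ℕ) : x / q ^ (k + 1) = x * (q⁻¹) ^ (k + 1) := by
  rw [div_eq_mul_inv, inv_pow]

lemma summable_geom (hq : 1 < q) : Summable (fun k : ℕ => (1:ℝ) / q ^ (k + 1)) := by
  have h0 : (0:ℝ) ≤ q⁻¹ := by positivity
  have := (summable_geometric_of_lt_one h0 (inv_lt hq)).mul_left q⁻¹
  refine this.congr fun k => ?_
  rw [term_rw hq, one_mul, pow_succ, mul_comm]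

lemma tsum_geom (hq : 1 < q) : ∑' k : ℕ, (1:ℝ) / q ^ (k + 1) = 1 / (q - 1) := by
  have h0 : (0:ℝ) ≤ q⁻¹ := by positivity
  have h1 : ∑' k : ℕ, (q⁻¹) ^ k = (1 - q⁻¹)⁻¹ := tsum_geometric_of_lt_one h0 (inv_lt hq)
  have h2 : ∑' k : ℕ, (1:ℝ) / q ^ (k + 1) = ∑' k : ℕ, q⁻¹ * (q⁻¹) ^ k := by
    refine tsum_congr fun k => ?_
    rw [term_rw hq, one_mul, pow_succ, mul_comm]
  rw [h2, tsum_mul_left, h1]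
  have hqne : q ≠ 0 := ne_of_gt (q0 hq)
  have hne : q - 1 ≠ 0 := by intro h; nlinarith
  rw [eq_div_iff hne]
  field_simp

lemma summable_R (hq : 1 < q) (hd : ∀ i, d i ≤ 1) (m : ℕ) :
    Summable (fun k : ℕ => (d (m + k) : ℝ) / q ^ (k + 1)) := by
  refine Summable.of_nonneg_of_le (fun k => ?_) (fun k => ?_) (summable_geom hq)
  · have : (0:ℝ) < q ^ (k+1) := pow_pos (q0 hq) _
    positivity
  · have hq0 : (0:ℝ) < q := q0 hq
    gcongr
    exact_mod_cast hd (m + k)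

lemma R_nonneg (hq : 1 < q) (m : ℕ) : 0 ≤ R q d m := by
  refine tsum_nonneg fun k => ?_
  have : (0:ℝ) < q ^ (k+1) := pow_pos (q0 hq) _
  positivity

lemma R_le_cap (hq : 1 < q) (hd : ∀ i, d i ≤ 1) (m : ℕ) : R q d m ≤ 1 / (q - 1) := by
  rw [← tsum_geom hq]
  refine Summable.tsum_le_tsum (fun k => ?_) (summable_R hq hd m) (summable_geom hq)
  have hq0 : (0:ℝ) < q := q0 hq
  gcongr
  exact_mod_cast hd (m + k)

lemma R_split (hq : 1 < q) (hd : ∀ i, d i ≤ 1) (m N : ℕ) :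
    R q d m = (∑ k ∈ Finset.range N, (d (m + k) : ℝ) / q ^ (k + 1))
      + (1 / q ^ N) * R q d (m + N) := by
  have hs := summable_R hq hd m
  have h1 := (Summable.sum_add_tsum_nat_add N hs).symm
  rw [R, h1]
  congr 1
  rw [R, ← tsum_mul_left]
  refine tsum_congr fun k => ?_
  have hqk : q ^ N ≠ 0 := ne_of_gt (pow_pos (q0 hq) _)
  have : m + (k + N) = m + N + k := by omega
  rw [this]
  rw [div_mul_eq_mul_div, one_mul, div_div, ← pow_add]
  ring_nf

lemma R_succ (hq : 1 < q) (hd : ∀ i, d i ≤ 1) (m : ℕ) :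
    R q d m = (d m : ℝ) / q + (1 / q) * R q d (m + 1) := by
  have := R_split hq hd m 1
  simpa [Finset.sum_range_one, pow_one] using this

lemma R_congr {n : ℕ} (h : ∀ k, d (m + k) = e (n + k)) : R q d m = R q e n := by
  refine tsum_congr fun k => ?_
  rw [h k]

lemma R_mono_q {q' : ℝ} (hq : 1 < q) (hq' : q ≤ q') (hd : ∀ i, d i ≤ 1) (m : ℕ) :
    R q' d m ≤ R q d m := by
  refine Summable.tsum_le_tsum (fun k => ?_) (summable_R (lt_of_lt_of_le hq hq') hd m) (summable_R hq hd m)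
  apply div_le_div_of_nonneg_left ?_ (pow_pos (q0 hq) _) ?_
  · positivity
  · exact pow_le_pow_left₀ (le_of_lt (q0 hq)) hq' _

lemma R_strict_mono_q {q' : ℝ} (hq : 1 < q) (hq' : q < q') (hd : ∀ i, d i ≤ 1)
    {m k : ℕ} (hk : 1 ≤ d (m + k)) : R q' d m < R q d m := by
  refine Summable.tsum_lt_tsum (i := k) (fun j => ?_) ?_
    (summable_R (lt_trans hq hq') hd m) (summable_R hq hd m)
  · apply div_le_div_of_nonneg_left ?_ (pow_pos (q0 hq) _) ?_
    · positivity
    · exact pow_le_pow_left₀ (le_of_lt (q0 hq)) (le_of_lt hq') _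
  · have h1 : (1:ℝ) ≤ (d (m+k) : ℝ) := by exact_mod_cast hk
    apply div_lt_div_of_pos_left (by linarith) (pow_pos (q0 hq) _)
    exact pow_lt_pow_left₀ hq' (le_of_lt (q0 hq)) (by omega)

lemma R_ge_term (hq : 1 < q) (hd : ∀ i, d i ≤ 1) (m k : ℕ) :
    (d (m + k) : ℝ) / q ^ (k + 1) ≤ R q d m := by
  refine Summable.le_tsum (summable_R hq hd m) k fun j _ => ?_
  have : (0:ℝ) < q ^ (j+1) := pow_pos (q0 hq) _
  positivity

lemma R_pos (hq : 1 < q) (hd : ∀ i, d i ≤ 1) {m k : ℕ} (hk : 1 ≤ d (m + k)) :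
    0 < R q d m := by
  refine lt_of_lt_of_le ?_ (R_ge_term hq hd m k)
  have h1 : (1:ℝ) ≤ (d (m+k) : ℝ) := by exact_mod_cast hk
  have : (0:ℝ) < q ^ (k+1) := pow_pos (q0 hq) _
  positivity

lemma R_eq_zero (hq : 1 < q) (hd : ∀ i, d i ≤ 1) {m : ℕ} (h : R q d m = 0) :
    ∀ k, d (m + k) = 0 := by
  intro k
  by_contra hne
  have : 1 ≤ d (m + k) := by omega
  have := R_pos hq hd (m := m) (k := k) this
  linarith

lemma R_refl (hq : 1 < q) (hd : ∀ i, d i ≤ 1) (m : ℕ) :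
    R q (refl d) m = 1 / (q - 1) - R q d m := by
  rw [← tsum_geom hq]
  simp only [R]
  rw [← Summable.tsum_sub (summable_geom hq) (summable_R hq hd m)]
  refine tsum_congr fun k => ?_
  rw [refl]
  have h1 : ((1 - d (m+k) : ℕ) : ℝ) = 1 - (d (m+k) : ℝ) := by
    have := hd (m+k); push_cast [Nat.cast_sub this]; ring
  rw [h1, sub_div]

lemma seqVal_eq_R : seqVal q d = R q d 0 := tsum_congr fun k => by rw [Nat.zero_add]

end RAPI

end QsP
namespace QsP

/-- The strict digit conditions characterizing unique expansions. -/
def Cond (q : ℝ) (d : ℕ → ℕ) : Prop :=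
  (∀ i, d i ≤ 1) ∧ ∀ i, (d i = 0 → R q d (i + 1) < 1) ∧ (d i = 1 → R q (refl d) (i + 1) < 1)

/-- The weak digit conditions. -/
def WCond (q : ℝ) (d : ℕ → ℕ) : Prop :=
  (∀ i, d i ≤ 1) ∧ ∀ i, (d i = 0 → R q d (i + 1) ≤ 1) ∧ (d i = 1 → R q (refl d) (i + 1) ≤ 1)

section Greedy

variable {q : ℝ}

/-- Greedy remainders. -/
noncomputable def gr (q y : ℝ) : ℕ → ℝ
  | 0 => y
  | (i + 1) => if 1 / q ^ (i + 1) ≤ gr q y i then gr q y i - 1 / q ^ (i + 1) else gr q y i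

/-- Greedy digits. -/
noncomputable def gd (q y : ℝ) (i : ℕ) : ℕ := if 1 / q ^ (i + 1) ≤ gr q y i then 1 else 0

lemma gd_le_one (q y : ℝ) (i : ℕ) : gd q y i ≤ 1 := by
  rw [gd]; split <;> omega

lemma gr_nonneg {y : ℝ} (hy : 0 ≤ y) (i : ℕ) : 0 ≤ gr q y i := by
  induction i with
  | zero => exact hy
  | succ n ih =>
    rw [gr]
    split
    · linarith [‹1 / q ^ (n+1) ≤ gr q y n›]
    · exact ih

lemma gr_le (hq1 : 1 < q) (hq2 : q < 2) {y : ℝ} (hy : y ≤ 1 / (q - 1)) (i : ℕ) :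
    gr q y i ≤ (1 / q ^ i) * (1 / (q - 1)) := by
  have hq0 : (0:ℝ) < q := q0 hq1
  have hqm : (0:ℝ) < q - 1 := by linarith
  induction i with
  | zero => simpa [gr] using hy
  | succ n ih =>
    have hpow : (0:ℝ) < q ^ n := pow_pos hq0 n
    have hpow1 : (0:ℝ) < q ^ (n+1) := pow_pos hq0 (n+1)
    rw [gr]
    split
    · rename_i h
      have : (1 / q ^ n) * (1 / (q - 1)) - 1 / q ^ (n+1) = (1 / q ^ (n+1)) * (1 / (q - 1)) := by
        rw [pow_succ]
        field_simp
        ring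
      linarith [ih]
    · rename_i h
      push_neg at h
      have h2 : (1:ℝ) ≤ 1 / (q - 1) := by
        rw [le_div_iff₀ hqm]; linarith
      calc gr q y n ≤ 1 / q ^ (n+1) := le_of_lt h
        _ ≤ (1 / q ^ (n+1)) * (1 / (q - 1)) := by
            nth_rewrite 1 [← mul_one (1 / q ^ (n+1))]
            apply mul_le_mul_of_nonneg_left h2 (by positivity)

lemma gr_partial (hq1 : 1 < q) (y : ℝ) (N : ℕ) :
    (∑ k ∈ Finset.range N, (gd q y k : ℝ) / q ^ (k + 1)) = y - gr q y N := by
  induction N with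
  | zero => simp [gr]
  | succ n ih =>
    rw [Finset.sum_range_succ, ih, gd, gr]
    split
    · simp; ring
    · simp

lemma gr_val (hq1 : 1 < q) (hq2 : q < 2) {y : ℝ} (hy0 : 0 ≤ y) (hy : y ≤ 1 / (q - 1)) :
    R q (gd q y) 0 = y := by
  have hq0 : (0:ℝ) < q := q0 hq1
  have hs : Summable (fun k : ℕ => (gd q y (0 + k) : ℝ) / q ^ (k + 1)) :=
    summable_R hq1 (gd_le_one q y) 0
  have hts : Filter.Tendsto (fun N => ∑ k ∈ Finset.range N, (gd q y (0 + k) : ℝ) / q ^ (k + 1))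
      Filter.atTop (nhds (R q (gd q y) 0)) := hs.hasSum.tendsto_sum_nat
  have heq : ∀ N, (∑ k ∈ Finset.range N, (gd q y (0 + k) : ℝ) / q ^ (k + 1)) = y - gr q y N := by
    intro N; rw [← gr_partial hq1 y N]; simp
  have hgr0 : Filter.Tendsto (fun N => gr q y N) Filter.atTop (nhds 0) := by
    have hb : ∀ N, |gr q y N| ≤ (1 / (q - 1)) * (q⁻¹) ^ N := by
      intro N
      rw [abs_of_nonneg (gr_nonneg hy0 N)]
      have := gr_le hq1 hq2 hy N
      calc gr q y N ≤ (1 / q ^ N) * (1 / (q - 1)) := this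
        _ = (1 / (q - 1)) * (q⁻¹) ^ N := by rw [inv_pow]; ring
    have hgeo : Filter.Tendsto (fun N : ℕ => (1 / (q - 1)) * (q⁻¹) ^ N) Filter.atTop (nhds 0) := by
      have h1 : |q⁻¹| < 1 := by
        rw [abs_of_nonneg (by positivity)]; exact inv_lt hq1
      simpa using (tendsto_pow_atTop_nhds_zero_of_abs_lt_one h1).const_mul (1 / (q - 1))
    refine squeeze_zero_norm (fun n => ?_) hgeo
    simpa using hb _
  have h2 : Filter.Tendsto (fun N => y - gr q y N) Filter.atTop (nhds (y - 0)) :=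
    (tendsto_const_nhds).sub hgr0
  rw [sub_zero] at h2
  have := tendsto_nhds_unique (hts.congr (fun N => heq N)) h2
  linarith [this]

lemma greedy_exists (hq1 : 1 < q) (hq2 : q < 2) {y : ℝ} (hy0 : 0 ≤ y) (hy : y ≤ 1 / (q - 1)) :
    ∃ g : ℕ → ℕ, (∀ i, g i ≤ 1) ∧ R q g 0 = y :=
  ⟨gd q y, gd_le_one q y, gr_val hq1 hq2 hy0 hy⟩

end Greedy

section Splice

variable {q : ℝ} {d g : ℕ → ℕ}

/-- Replace digit `i` by `b` and the tail after `i` by `g`. -/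
def splice (d : ℕ → ℕ) (i b : ℕ) (g : ℕ → ℕ) : ℕ → ℕ :=
  fun j => if j < i then d j else if j = i then b else g (j - (i + 1))

lemma splice_le_one (hd : ∀ j, d j ≤ 1) (hg : ∀ j, g j ≤ 1) {b : ℕ} (hb : b ≤ 1) (i : ℕ) :
    ∀ j, splice d i b g j ≤ 1 := by
  intro j; rw [splice]
  split
  · exact hd j
  · split
    · exact hb
    · exact hg _

lemma splice_val (hq1 : 1 < q) (hd : ∀ j, d j ≤ 1) (hg : ∀ j, g j ≤ 1) {b : ℕ} (hb : b ≤ 1)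
    (i : ℕ) :
    R q (splice d i b g) 0 = (∑ k ∈ Finset.range i, (d k : ℝ) / q ^ (k + 1))
      + (b : ℝ) / q ^ (i + 1) + (1 / q ^ (i + 1)) * R q g 0 := by
  have hsp := splice_le_one hd hg hb (d := d) (g := g) i
  have h1 := R_split hq1 hsp 0 (i + 1)
  have h2 : R q (splice d i b g) (0 + (i + 1)) = R q g 0 := by
    refine R_congr fun k => ?_
    rw [splice]
    have h3 : ¬ (0 + (i+1) + k < i) := by omega
    have h4 : ¬ (0 + (i+1) + k = i) := by omega
    rw [if_neg h3, if_neg h4]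
    congr 1
    omega
  rw [h1, h2, Finset.sum_range_succ]
  congr 2
  · refine Finset.sum_congr rfl fun k hk => ?_
    rw [Finset.mem_range] at hk
    rw [splice, Nat.zero_add, if_pos hk]
  · rw [splice, Nat.zero_add, if_neg (by omega), if_pos rfl]

/-- Value of `d` itself split at `i`. -/
lemma self_val (hq1 : 1 < q) (hd : ∀ j, d j ≤ 1) (i : ℕ) :
    R q d 0 = (∑ k ∈ Finset.range i, (d k : ℝ) / q ^ (k + 1))
      + (d i : ℝ) / q ^ (i + 1) + (1 / q ^ (i + 1)) * R q d (i + 1) := by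
  have h1 := R_split hq1 hd 0 (i + 1)
  rw [h1, Finset.sum_range_succ]
  simp [Nat.zero_add]

end Splice

end QsP
namespace QsP

section Char

variable {q x : ℝ} {d e : ℕ → ℕ}

lemma cond_of_unique (hq1 : 1 < q) (hq2 : q < 2) (hx : IsExpansion q x d)
    (hu : ∀ e, IsExpansion q x e → e = d) : Cond q d := by
  obtain ⟨hd, hval⟩ := hx
  have hq0 : (0:ℝ) < q := q0 hq1
  have hqm : (0:ℝ) < q - 1 := by linarith
  have hxR : x = R q d 0 := by rw [hval, seqVal_eq_R]
  refine ⟨hd, fun i => ⟨?_, ?_⟩⟩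
  · -- d i = 0 → R q d (i+1) < 1
    intro hdi
    by_contra hge
    push_neg at hge
    -- build a second expansion with digit 1 at i
    have hy0 : (0:ℝ) ≤ R q d (i+1) - 1 := by linarith
    have hy1 : R q d (i+1) - 1 ≤ 1 / (q - 1) := by
      have := R_le_cap hq1 hd (i+1); linarith
    obtain ⟨g, hg, hgval⟩ := greedy_exists hq1 hq2 hy0 hy1
    set e := splice d i 1 g with he
    have hee : IsExpansion q x e := by
      refine ⟨splice_le_one hd hg le_rfl i, ?_⟩
      rw [seqVal_eq_R, splice_val hq1 hd hg le_rfl i, hgval, hxR, self_val hq1 hd i, hdi]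
      push_cast
      ring
    have := hu e hee
    have : e i = d i := by rw [this]
    rw [he, splice, if_neg (by omega), if_pos rfl, hdi] at this
    exact one_ne_zero this
  · -- d i = 1 → R q (refl d) (i+1) < 1
    intro hdi
    by_contra hge
    push_neg at hge
    rw [R_refl hq1 hd (i+1)] at hge
    -- so R q d (i+1) ≤ 1/(q-1) - 1
    have hy0 : (0:ℝ) ≤ R q d (i+1) + 1 := by have := R_nonneg (d := d) hq1 (i+1); linarith
    have hy1 : R q d (i+1) + 1 ≤ 1 / (q - 1) := by linarith
    obtain ⟨g, hg, hgval⟩ := greedy_exists hq1 hq2 hy0 hy1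
    set e := splice d i 0 g with he
    have hee : IsExpansion q x e := by
      refine ⟨splice_le_one hd hg (by omega) i, ?_⟩
      rw [seqVal_eq_R, splice_val hq1 hd hg (by omega) i, hgval, hxR, self_val hq1 hd i, hdi]
      push_cast
      ring
    have := hu e hee
    have : e i = d i := by rw [this]
    rw [he, splice, if_neg (by omega), if_pos rfl, hdi] at this
    exact zero_ne_one this

lemma digit_eq (hq1 : 1 < q) (hd : ∀ j, d j ≤ 1) (he : ∀ j, e j ≤ 1)
    (hvv : R q d 0 = R q e 0) {n : ℕ} (hpre : ∀ i, i < n → d i = e i) :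
    (d n : ℝ) + R q d (n + 1) = (e n : ℝ) + R q e (n + 1) := by
  have hq0 : (0:ℝ) < q := q0 hq1
  have h1 := self_val hq1 hd n
  have h2 := self_val hq1 he n
  have hsum : (∑ k ∈ Finset.range n, (d k : ℝ) / q ^ (k + 1))
      = ∑ k ∈ Finset.range n, (e k : ℝ) / q ^ (k + 1) := by
    refine Finset.sum_congr rfl fun k hk => ?_
    rw [Finset.mem_range] at hk
    rw [hpre k hk]
  rw [h1, h2, hsum] at hvv
  have hpow : (0:ℝ) < q ^ (n+1) := pow_pos hq0 _
  have := hvv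
  have h3 : (1 / q^(n+1)) * ((d n:ℝ) + R q d (n+1)) = (1/q^(n+1)) * ((e n:ℝ) + R q e (n+1)) := by
    linear_combination this
  exact mul_left_cancel₀ (by positivity) h3

lemma unique_of_cond (hq1 : 1 < q) (hq2 : q < 2) (hc : Cond q d)
    (he : ∀ j, e j ≤ 1) (hvv : R q e 0 = R q d 0) : e = d := by
  classical
  obtain ⟨hd, hcond⟩ := hc
  by_contra hne
  have hex : ∃ n, e n ≠ d n := by
    by_contra hall; push_neg at hall; exact hne (funext hall)
  set n := Nat.find hex with hn
  have hdiff : e n ≠ d n := Nat.find_spec hex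
  have hpre : ∀ i, i < n → e i = d i := by
    intro i hi
    have := Nat.find_min hex hi
    push_neg at this
    exact this
  have hkey := digit_eq hq1 he hd hvv hpre
  have hcap := R_le_cap hq1 he (n+1)
  have hq0 : (0:ℝ) < q := q0 hq1
  have hqm : (0:ℝ) < q - 1 := by linarith
  rcases Nat.le_one_iff_eq_zero_or_eq_one.mp (hd n) with hh | hh
  · -- d n = 0, so e n = 1
    have hen : e n = 1 := by have := he n; omega
    rw [hen, hh] at hkey
    push_cast at hkey
    have h1 := (hcond n).1 hh
    have h2 := R_nonneg (d := e) hq1 (n+1)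
    linarith
  · -- d n = 1, so e n = 0
    have hen : e n = 0 := by have := he n; omega
    rw [hen, hh] at hkey
    push_cast at hkey
    have h1 := (hcond n).2 hh
    rw [R_refl hq1 hd (n+1)] at h1
    linarith

lemma hasUnique_of_cond (hq1 : 1 < q) (hq2 : q < 2) (hc : Cond q d) :
    HasUniqueExpansion q (R q d 0) := by
  refine ⟨d, ⟨hc.1, seqVal_eq_R.symm⟩, fun e hee => ?_⟩
  exact unique_of_cond hq1 hq2 hc hee.1 (by rw [← seqVal_eq_R, ← hee.2])

lemma exists_cond_of_unique (hq1 : 1 < q) (hq2 : q < 2) (hu : HasUniqueExpansion q x) :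
    ∃ d, IsExpansion q x d ∧ Cond q d := by
  obtain ⟨d, hd, hun⟩ := hu
  exact ⟨d, hd, cond_of_unique hq1 hq2 hd (fun e hee => hun e hee)⟩

end Char

section EJK

variable {q : ℝ} {d : ℕ → ℕ}

lemma qG_gt_one : 1 < qG := by
  rw [qG]
  have : (1:ℝ) < Real.sqrt 5 := by
    have : (1:ℝ) = Real.sqrt 1 := (Real.sqrt_one).symm
    rw [this]
    exact Real.sqrt_lt_sqrt (by norm_num) (by norm_num)
  linarith

lemma qG_lt_two : qG < 2 := by
  rw [qG]
  have : Real.sqrt 5 < 3 := by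
    have h3 : (3:ℝ) = Real.sqrt 9 := by
      rw [show (9:ℝ) = 3^2 by norm_num, Real.sqrt_sq (by norm_num)]
    rw [h3]
    exact Real.sqrt_lt_sqrt (by norm_num) (by norm_num)
  linarith

lemma qG_sq : qG ^ 2 = qG + 1 := by
  rw [qG]
  have h5 : Real.sqrt 5 ^ 2 = 5 := Real.sq_sqrt (by norm_num)
  ring_nf
  nlinarith [h5]

/-- For bases `q ≤ qG`, the digit conditions force a constant sequence. -/
lemma ejk_const (hq1 : 1 < q) (hqG : q ≤ qG) (hc : Cond q d) : ∀ i, d i = d 0 := by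
  obtain ⟨hd, hcond⟩ := hc
  have hq0 : (0:ℝ) < q := q0 hq1
  have hqm : (0:ℝ) < q - 1 := by linarith
  have hq2 : q < 2 := lt_of_le_of_lt hqG qG_lt_two
  have hqq : q * (q - 1) ≤ 1 := by nlinarith [qG_sq, qG_gt_one]
  have step : ∀ i, d (i + 1) = d i := by
    intro i
    by_contra hne
    have hdi := hd i
    have hdi1 := hd (i + 1)
    rcases Nat.le_one_iff_eq_zero_or_eq_one.mp hdi with h1 | h1
    · -- d i = 0, d (i+1) = 1
      have h2 : d (i+1) = 1 := by omega
      have hA := (hcond i).1 h1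
      have hB := (hcond (i+1)).2 h2
      rw [R_refl hq1 hd (i+1+1)] at hB
      -- R q d (i+1) = 1/q + (1/q) R q d (i+2) > (1/q)(1 + 1/(q-1) - 1) = 1/(q(q-1)) ≥ 1
      have hsucc := R_succ hq1 hd (i+1)
      rw [h2] at hsucc
      have : R q d (i + 1 + 1) > 1 / (q - 1) - 1 := by linarith
      have hgt : R q d (i+1) > (1/q) * (1 + (1/(q-1) - 1)) := by
        rw [hsucc]
        push_cast
        have hq0' : (0:ℝ) < 1/q := by positivity
        nlinarith
      have : (1/q) * (1 + (1/(q-1) - 1)) = 1 / (q * (q-1)) := by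
        field_simp
        ring
      rw [this] at hgt
      have hge1 : (1:ℝ) ≤ 1 / (q * (q-1)) := by
        rw [le_div_iff₀ (by positivity)]
        linarith
      linarith
    · -- d i = 1, d (i+1) = 0
      have h2 : d (i+1) = 0 := by omega
      have hA := (hcond i).2 h1
      have hB := (hcond (i+1)).1 h2
      -- reflected tail at i: R q (refl d) (i+1) = (1 - d(i+1))/q + (1/q) R q (refl d) (i+2)
      have hsucc := R_succ hq1 (fun j => by rw [refl]; omega) (i+1) (d := refl d)
      have hrfl1 : refl d (i+1) = 1 := by rw [refl, h2]
      rw [hrfl1] at hsucc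
      have hrfl2 : R q (refl d) (i+1+1) = 1/(q-1) - R q d (i+1+1) := R_refl hq1 hd _
      have : R q (refl d) (i + 1 + 1) > 1 / (q - 1) - 1 := by
        rw [hrfl2]; linarith
      have hgt : R q (refl d) (i+1) > (1/q) * (1 + (1/(q-1) - 1)) := by
        rw [hsucc]
        push_cast
        have h1q : (0:ℝ) < 1/q := by positivity
        nlinarith
      have heq : (1/q) * (1 + (1/(q-1) - 1)) = 1 / (q * (q-1)) := by
        field_simp
        ring
      rw [heq] at hgt
      have hge1 : (1:ℝ) ≤ 1 / (q * (q-1)) := by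
        rw [le_div_iff₀ (by positivity)]
        linarith
      linarith
  intro i
  induction i with
  | zero => rfl
  | succ n ih => rw [step n, ih]

end EJK

end QsP
namespace QsP

section Lex

variable {q : ℝ} {c d e : ℕ → ℕ}

lemma seqLt_trichotomy (h : c ≠ e) : seqLt c e ∨ seqLt e c := by
  classical
  have hex : ∃ n, c n ≠ e n := by
    by_contra hall; push_neg at hall; exact h (funext hall)
  set n := Nat.find hex with hn
  have hdiff : c n ≠ e n := Nat.find_spec hex
  have hpre : ∀ i, i < n → c i = e i := by
    intro i hi
    have := Nat.find_min hex hi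
    push_neg at this
    exact this
  rcases lt_or_gt_of_ne hdiff with hlt | hgt
  · exact Or.inl ⟨n, hpre, hlt⟩
  · exact Or.inr ⟨n, fun i hi => (hpre i hi).symm, hgt⟩

/-- If `e` satisfies the digit conditions and `c <lex e` then the value of `c` is smaller. -/
lemma R_lt_of_seqLt (hq1 : 1 < q) (hq2 : q < 2) (hc : ∀ j, c j ≤ 1) (he : Cond q e)
    (h : seqLt c e) : R q c 0 < R q e 0 := by
  obtain ⟨n, hpre, hlt⟩ := h
  obtain ⟨hed, hcond⟩ := he
  have hq0 : (0:ℝ) < q := q0 hq1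
  have hqm : (0:ℝ) < q - 1 := by linarith
  have hcn : c n = 0 := by have := hc n; have := hed n; omega
  have hen : e n = 1 := by have := hc n; have := hed n; omega
  have h1 := self_val hq1 hc n (q := q)
  have h2 := self_val hq1 hed n (q := q)
  have hsum : (∑ k ∈ Finset.range n, (c k : ℝ) / q ^ (k + 1))
      = ∑ k ∈ Finset.range n, (e k : ℝ) / q ^ (k + 1) := by
    refine Finset.sum_congr rfl fun k hk => ?_
    rw [Finset.mem_range] at hk
    rw [hpre k hk]
  have hrefl := (hcond n).2 hen
  rw [R_refl hq1 hed (n+1)] at hrefl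
  have hce := R_le_cap hq1 hc (n+1) (q := q)
  have hpow : (0:ℝ) < q ^ (n+1) := pow_pos hq0 _
  have hkey : R q c (n+1) < 1 + R q e (n+1) := by linarith
  have hmul := mul_lt_mul_of_pos_left hkey (show (0:ℝ) < 1/q^(n+1) by positivity)
  rw [h1, h2, hsum, hcn, hen]
  push_cast
  have hz : (0:ℝ)/q^(n+1) = 0 := by ring
  have ho : (1:ℝ)/q^(n+1) * (1 + R q e (n+1)) = 1/q^(n+1) + 1/q^(n+1) * R q e (n+1) := by ring
  rw [hz]
  linarith [hmul, ho]

/-- If `e` satisfies the digit conditions and `e <lex c` then the value of `c` is larger. -/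
lemma R_gt_of_seqLt (hq1 : 1 < q) (hq2 : q < 2) (hc : ∀ j, c j ≤ 1) (he : Cond q e)
    (h : seqLt e c) : R q e 0 < R q c 0 := by
  obtain ⟨n, hpre, hlt⟩ := h
  obtain ⟨hed, hcond⟩ := he
  have hq0 : (0:ℝ) < q := q0 hq1
  have hen : e n = 0 := by have := hc n; have := hed n; omega
  have hcn : c n = 1 := by have := hc n; have := hed n; omega
  have h1 := self_val hq1 hc n (q := q)
  have h2 := self_val hq1 hed n (q := q)
  have hsum : (∑ k ∈ Finset.range n, (e k : ℝ) / q ^ (k + 1))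
      = ∑ k ∈ Finset.range n, (c k : ℝ) / q ^ (k + 1) := by
    refine Finset.sum_congr rfl fun k hk => ?_
    rw [Finset.mem_range] at hk
    rw [hpre k hk]
  have htail := (hcond n).1 hen
  have hcpos := R_nonneg (d := c) hq1 (n+1) (q := q)
  have hpow : (0:ℝ) < q ^ (n+1) := pow_pos hq0 _
  have hkey : R q e (n+1) < 1 + R q c (n+1) := by linarith
  have hmul := mul_lt_mul_of_pos_left hkey (show (0:ℝ) < 1/q^(n+1) by positivity)
  rw [h1, h2, hsum, hcn, hen]
  push_cast
  have hz : (0:ℝ)/q^(n+1) = 0 := by ring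
  have ho : (1:ℝ)/q^(n+1) * (1 + R q c (n+1)) = 1/q^(n+1) + 1/q^(n+1) * R q c (n+1) := by ring
  rw [hz]
  linarith [hmul, ho]

/-- Conditions transfer to any larger base. -/
lemma cond_mono {q' : ℝ} (hq1 : 1 < q) (hq' : q ≤ q') (hc : Cond q d) : Cond q' d := by
  obtain ⟨hd, hcond⟩ := hc
  refine ⟨hd, fun i => ⟨fun h0 => ?_, fun h1 => ?_⟩⟩
  · exact lt_of_le_of_lt (R_mono_q hq1 hq' hd (i+1)) ((hcond i).1 h0)
  · exact lt_of_le_of_lt (R_mono_q hq1 hq' (fun j => by rw [refl]; omega) (i+1)) ((hcond i).2 h1)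

end Lex

section Prefix

variable {c e : ℕ → ℕ}

/-- Binary encoding of the prefix of length `I+1`. -/
def np (d : ℕ → ℕ) (I : ℕ) : ℕ := ∑ i ∈ Finset.range (I + 1), d i * 2 ^ (I - i)

lemma np_lt_of_seqLt (hc : ∀ j, c j ≤ 1) (he : ∀ j, e j ≤ 1) {n I : ℕ}
    (hpre : ∀ i, i < n → c i = e i) (hlt : c n < e n) (hnI : n ≤ I) : np c I < np e I := by
  have hcn : c n = 0 := by have := hc n; have := he n; omega
  have hen : e n = 1 := by have := hc n; have := he n; omega
  rw [np, np]
  have hsplit : ∀ d : ℕ → ℕ, ∑ i ∈ Finset.range (I + 1), d i * 2 ^ (I - i)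
      = (∑ i ∈ Finset.range n, d i * 2 ^ (I - i)) + d n * 2 ^ (I - n)
        + ∑ i ∈ Finset.Ico (n+1) (I+1), d i * 2 ^ (I - i) := by
    intro d
    rw [Finset.range_eq_Ico, ← Finset.sum_Ico_consecutive _ (by omega : 0 ≤ n+1) (by omega : n+1 ≤ I+1)]
    congr 1
    rw [← Finset.range_eq_Ico]
    exact Finset.sum_range_succ _ n
  rw [hsplit c, hsplit e]
  have heq : (∑ i ∈ Finset.range n, c i * 2 ^ (I - i)) = ∑ i ∈ Finset.range n, e i * 2 ^ (I - i) := by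
    refine Finset.sum_congr rfl fun k hk => ?_
    rw [Finset.mem_range] at hk
    rw [hpre k hk]
  rw [heq, hcn, hen]
  have htail : (∑ i ∈ Finset.Ico (n+1) (I+1), c i * 2 ^ (I - i)) < 2 ^ (I - n) := by
    calc (∑ i ∈ Finset.Ico (n+1) (I+1), c i * 2 ^ (I - i))
        ≤ ∑ i ∈ Finset.Ico (n+1) (I+1), 1 * 2 ^ (I - i) := by
          refine Finset.sum_le_sum fun i _ => ?_
          exact Nat.mul_le_mul_right _ (hc i)
      _ < 2 ^ (I - n) := by
          simp only [one_mul]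
          -- ∑_{i=n+1}^{I} 2^(I-i) = 2^(I-n) - 1
          have : ∀ M : ℕ, ∀ nn : ℕ, (∑ i ∈ Finset.Ico (nn+1) (nn+1+M), 2 ^ (nn + M - i)) = 2 ^ M - 1 := by
            intro M
            induction M with
            | zero => intro nn; simp
            | succ mm ih =>
              intro nn
              have h1 : nn + 1 + (mm + 1) = (nn + 1) + 1 + mm := by omega
              rw [h1]
              rw [Finset.sum_eq_sum_Ico_succ_bot (by omega)]
              have h2 : nn + (mm + 1) - (nn + 1) = mm := by omega
              rw [h2]
              have h3 : (∑ i ∈ Finset.Ico (nn+1+1) (nn+1+1+mm), 2 ^ (nn + (mm+1) - i))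
                  = ∑ i ∈ Finset.Ico (nn+1+1) (nn+1+1+mm), 2 ^ (nn + 1 + mm - i) := by
                refine Finset.sum_congr rfl fun i hi => ?_
                congr 1
                omega
              rw [h3, ih (nn+1)]
              have : 1 ≤ 2 ^ mm := Nat.one_le_two_pow
              omega
          have hM := this (I - n) n
          have h4 : n + 1 + (I - n) = I + 1 := by omega
          rw [h4] at hM
          have h5 : (∑ i ∈ Finset.Ico (n+1) (I+1), 2 ^ (I - i))
              = ∑ i ∈ Finset.Ico (n+1) (I+1), 2 ^ (n + (I - n) - i) := by
            refine Finset.sum_congr rfl fun i hi => ?_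
            congr 1
            omega
          rw [h5, hM]
          have : 1 ≤ 2 ^ (I - n) := Nat.one_le_two_pow
          omega
  omega

lemma np_le_of_seqLt (hc : ∀ j, c j ≤ 1) (he : ∀ j, e j ≤ 1) (h : seqLt c e) (I : ℕ) :
    np c I ≤ np e I := by
  obtain ⟨n, hpre, hlt⟩ := h
  by_cases hnI : n ≤ I
  · exact le_of_lt (np_lt_of_seqLt hc he hpre hlt hnI)
  · -- prefixes up to I agree
    push_neg at hnI
    apply le_of_eq
    rw [np, np]
    refine Finset.sum_congr rfl fun k hk => ?_
    rw [Finset.mem_range] at hk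
    rw [hpre k (by omega)]

end Prefix

end QsP
namespace QsP

section Stab

variable {c e : ℕ → ℕ}

lemma np_inj (hc : ∀ j, c j ≤ 1) (he : ∀ j, e j ≤ 1) {I : ℕ} (h : np c I = np e I) :
    ∀ i, i ≤ I → c i = e i := by
  by_contra hne
  push_neg at hne
  obtain ⟨i0, hi0, hne0⟩ := hne
  classical
  have hex : ∃ n, c n ≠ e n := ⟨i0, hne0⟩
  set n := Nat.find hex with hn
  have hdiff : c n ≠ e n := Nat.find_spec hex
  have hnle : n ≤ I := le_trans (Nat.find_min' hex hne0) hi0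
  have hpre : ∀ i, i < n → c i = e i := by
    intro i hi
    have := Nat.find_min hex hi
    push_neg at this
    exact this
  rcases lt_or_gt_of_ne hdiff with hlt | hgt
  · have := np_lt_of_seqLt hc he hpre hlt hnle
    omega
  · have := np_lt_of_seqLt he hc (fun i hi => (hpre i hi).symm) hgt hnle
    omega

/-- An antitone sequence of naturals is eventually constant. -/
lemma nat_antitone_stab (a : ℕ → ℕ) (ha : ∀ j, a (j + 1) ≤ a j) :
    ∃ J, ∀ j, J ≤ j → a j = a J := by
  have hmono : ∀ j k, j ≤ k → a k ≤ a j := by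
    intro j k hjk
    induction k, hjk using Nat.le_induction with
    | base => exact le_rfl
    | succ n hn ih => exact le_trans (ha n) ih
  classical
  have hne : (Set.range a).Nonempty := ⟨a 0, 0, rfl⟩
  obtain ⟨J, hJ⟩ := Nat.sInf_mem hne
  refine ⟨J, fun j hj => ?_⟩
  have h1 : a j ≤ a J := hmono J j hj
  have h2 : sInf (Set.range a) ≤ a j := Nat.sInf_le ⟨j, rfl⟩
  omega

end Stab

section Est

variable {q q' : ℝ} {c e : ℕ → ℕ}

lemma sum_le_tsum_geom (hq : 1 < q) {q' : ℝ} (hq' : q ≤ q') (N : ℕ) :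
    (∑ k ∈ Finset.range N, ((1:ℝ) / q ^ (k+1) - 1 / q' ^ (k+1)))
      ≤ 1 / (q - 1) - 1 / (q' - 1) := by
  have hq'1 : 1 < q' := lt_of_lt_of_le hq hq'
  have h1 : (∑ k ∈ Finset.range N, ((1:ℝ) / q ^ (k+1) - 1 / q' ^ (k+1)))
      ≤ ∑' k : ℕ, ((1:ℝ) / q ^ (k+1) - 1 / q' ^ (k+1)) := by
    refine Summable.sum_le_tsum _ (fun k _ => ?_) ?_
    · have : q ^ (k+1) ≤ q' ^ (k+1) := pow_le_pow_left₀ (le_of_lt (q0 hq)) hq' _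
      have h2 : (0:ℝ) < q ^ (k+1) := pow_pos (q0 hq) _
      have h3 : (0:ℝ) < q' ^ (k+1) := pow_pos (q0 hq'1) _
      rw [sub_nonneg]
      exact div_le_div_of_nonneg_left one_pos.le h2 this |>.trans_eq rfl
    · exact (summable_geom hq).sub (summable_geom hq'1)
  rw [Summable.tsum_sub (summable_geom hq) (summable_geom hq'1), tsum_geom hq, tsum_geom hq'1] at h1
  exact h1

/-- Main estimate: values at nearby bases of sequences agreeing on a long prefix are close. -/
lemma est (hq : 1 < q) (hq' : q ≤ q') (hc : ∀ j, c j ≤ 1) (he : ∀ j, e j ≤ 1)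
    {a N : ℕ} (hag : ∀ i, i < N → c (a + i) = e (a + i)) :
    |R q' c a - R q e a| ≤ (1 / (q-1) - 1 / (q'-1)) + 2 * (1 / q ^ N) * (1 / (q - 1)) := by
  have hq'1 : 1 < q' := lt_of_lt_of_le hq hq'
  have hq0 : (0:ℝ) < q := q0 hq
  have hqm : (0:ℝ) < q - 1 := by linarith
  have h1 := R_split hq'1 hc a N
  have h2 := R_split hq he a N
  have hsumle : ∀ k ∈ Finset.range N, (c (a+k) : ℝ) / q' ^ (k+1) ≤ (e (a+k) : ℝ) / q ^ (k+1) := by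
    intro k hk
    rw [Finset.mem_range] at hk
    rw [hag k hk]
    exact div_le_div_of_nonneg_left (by positivity) (pow_pos hq0 _)
      (pow_le_pow_left₀ hq0.le hq' _)
  have hsumge : ∀ k ∈ Finset.range N, (e (a+k) : ℝ) / q ^ (k+1)
      ≤ (c (a+k) : ℝ) / q' ^ (k+1) + ((1:ℝ)/q^(k+1) - 1/q'^(k+1)) := by
    intro k hk
    rw [Finset.mem_range] at hk
    rw [hag k hk]
    have h3 : (0:ℝ) < q ^ (k+1) := pow_pos hq0 _
    have h4 : (0:ℝ) < q' ^ (k+1) := pow_pos (q0 hq'1) _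
    have h5 : (e (a+k) : ℝ) ≤ 1 := by exact_mod_cast he (a+k)
    have h6 : (0:ℝ) ≤ (e (a+k) : ℝ) := by positivity
    have h7 : q ^ (k+1) ≤ q' ^ (k+1) := pow_le_pow_left₀ hq0.le hq' _
    have h8 : (1:ℝ)/q'^(k+1) ≤ 1/q^(k+1) := one_div_le_one_div_of_le h3 h7
    have h9 : (0:ℝ) ≤ 1/q^(k+1) - 1/q'^(k+1) := by linarith
    have h10 := mul_le_mul_of_nonneg_right h5 h9
    have h11 : (e (a+k) : ℝ)/q^(k+1) - (e (a+k) : ℝ)/q'^(k+1)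
        = (e (a+k) : ℝ) * (1/q^(k+1) - 1/q'^(k+1)) := by ring
    linarith
  -- tail bounds
  have ht1 : 0 ≤ R q' c (a + N) := R_nonneg hq'1 _
  have ht2 : 0 ≤ R q e (a + N) := R_nonneg hq _
  have ht3 : R q' c (a + N) ≤ 1 / (q - 1) :=
    le_trans (R_le_cap hq'1 hc _) (one_div_le_one_div_of_le hqm (by linarith))
  have ht4 : R q e (a + N) ≤ 1 / (q - 1) := R_le_cap hq he _
  have hp1 : (0:ℝ) < 1 / q' ^ N := by positivity
  have hp2 : (0:ℝ) < 1 / q ^ N := by positivity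
  have hp3 : (1:ℝ) / q' ^ N ≤ 1 / q ^ N :=
    one_div_le_one_div_of_le (pow_pos hq0 N) (pow_le_pow_left₀ hq0.le hq' N)
  have hS1 : (∑ k ∈ Finset.range N, (c (a+k) : ℝ) / q' ^ (k+1))
      ≤ ∑ k ∈ Finset.range N, (e (a+k) : ℝ) / q ^ (k+1) := Finset.sum_le_sum hsumle
  have hS2 : (∑ k ∈ Finset.range N, (e (a+k) : ℝ) / q ^ (k+1))
      ≤ (∑ k ∈ Finset.range N, (c (a+k) : ℝ) / q' ^ (k+1)) + (1/(q-1) - 1/(q'-1)) := by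
    calc (∑ k ∈ Finset.range N, (e (a+k) : ℝ) / q ^ (k+1))
        ≤ ∑ k ∈ Finset.range N, ((c (a+k) : ℝ) / q' ^ (k+1) + ((1:ℝ)/q^(k+1) - 1/q'^(k+1))) :=
          Finset.sum_le_sum hsumge
      _ = (∑ k ∈ Finset.range N, (c (a+k) : ℝ) / q' ^ (k+1))
            + ∑ k ∈ Finset.range N, ((1:ℝ)/q^(k+1) - 1/q'^(k+1)) := by rw [Finset.sum_add_distrib]
      _ ≤ _ := by
          have := sum_le_tsum_geom hq hq' N
          linarith
  rw [abs_le]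
  constructor
  · -- lower bound
    rw [h1, h2]
    have hb1 : (1:ℝ)/q'^N * R q' c (a+N) ≥ 0 := by positivity
    have hb2 : (1:ℝ)/q^N * R q e (a+N) ≤ (1/q^N) * (1/(q-1)) := by
      apply mul_le_mul_of_nonneg_left ht4 (le_of_lt hp2)
    nlinarith
  · rw [h1, h2]
    have hb1 : (1:ℝ)/q'^N * R q' c (a+N) ≤ (1/q^N) * (1/(q-1)) := by
      calc (1:ℝ)/q'^N * R q' c (a+N) ≤ (1/q^N) * R q' c (a+N) := by
            apply mul_le_mul_of_nonneg_right hp3 ht1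
        _ ≤ (1/q^N) * (1/(q-1)) := by apply mul_le_mul_of_nonneg_left ht3 (le_of_lt hp2)
    have hb2 : (1:ℝ)/q^N * R q e (a+N) ≥ 0 := by positivity
    nlinarith

end Est

end QsP
namespace QsP

section SelfValAt

variable {q : ℝ} {d : ℕ → ℕ}

lemma self_val_at (hq1 : 1 < q) (hd : ∀ j, d j ≤ 1) (a j : ℕ) :
    R q d a = (∑ k ∈ Finset.range j, (d (a + k) : ℝ) / q ^ (k + 1))
      + (d (a + j) : ℝ) / q ^ (j + 1) + (1 / q ^ (j + 1)) * R q d (a + (j + 1)) := by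
  have h1 := R_split hq1 hd a (j + 1)
  rw [h1, Finset.sum_range_succ]

end SelfValAt

section TM

variable {τ : ℕ → ℕ}

lemma tau_le_one (hτ : IsThueMorse τ) : ∀ n, τ n ≤ 1 := by
  intro n
  induction n using Nat.strong_induction_on with
  | _ n ih =>
    rcases n with _ | n
    · rw [hτ.1]; omega
    · rcases Nat.even_or_odd (n + 1) with ⟨m, hm⟩ | ⟨m, hm⟩
      · have hm2 : n + 1 = 2 * m := by omega
        rw [hm2, hτ.2.1 m]
        exact ih m (by omega)
      · rw [hm, hτ.2.2 m]
        omega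

lemma tau1 (hτ : IsThueMorse τ) : τ 1 = 1 := by
  have ha := hτ.2.2 0
  have hb := hτ.1
  norm_num at ha
  omega

lemma tau2 (hτ : IsThueMorse τ) : τ 2 = 1 := by
  have h1 := tau1 hτ
  have ha := hτ.2.1 1
  norm_num at ha
  omega

lemma tau3 (hτ : IsThueMorse τ) : τ 3 = 0 := by
  have h1 := tau1 hτ
  have ha := hτ.2.2 1
  norm_num at ha
  omega

lemma tau_pow2 (hτ : IsThueMorse τ) : ∀ m, τ (2 ^ m) = 1 := by
  intro m
  induction m with
  | zero => simpa using tau1 hτ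
  | succ n ih =>
    have h : 2 ^ (n + 1) = 2 * 2 ^ n := by ring
    rw [h, hτ.2.1]
    exact ih

lemma tau_block (hτ : IsThueMorse τ) : ∀ a j, j < 2 ^ a → τ (2 ^ a + j) = 1 - τ j := by
  intro a
  induction a with
  | zero =>
    intro j hj
    have hj0 : j = 0 := by omega
    subst hj0
    show τ 1 = 1 - τ 0
    rw [tau1 hτ, hτ.1]
  | succ n ih =>
    intro j hj
    rcases Nat.even_or_odd j with ⟨r, hr⟩ | ⟨r, hr⟩
    · have hr2 : j = 2 * r := by omega
      subst hr2
      have e1 : 2 ^ (n + 1) + 2 * r = 2 * (2 ^ n + r) := by ring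
      rw [e1, hτ.2.1, ih r (by omega), hτ.2.1]
    · subst hr
      have e1 : 2 ^ (n + 1) + (2 * r + 1) = 2 * (2 ^ n + r) + 1 := by ring
      rw [e1, hτ.2.2, ih r (by omega), hτ.2.2]

/-- The Thue–Morse word is lexicographically maximal among its shifts. -/
lemma tm_shift_lt (hτ : IsThueMorse τ) :
    ∀ k, 1 ≤ k → ∃ j, 1 ≤ j ∧ (∀ i, 1 ≤ i → i < j → τ (k + i) = τ i) ∧ τ (k + j) < τ j := by
  have hle := tau_le_one hτ
  have h1 := tau1 hτ
  have h2 := tau2 hτ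
  have he := hτ.2.1
  have ho := hτ.2.2
  intro k
  induction k using Nat.strong_induction_on with
  | _ k ih =>
    intro hk
    rcases Nat.even_or_odd k with ⟨k', hk'⟩ | ⟨k', hk'⟩
    · -- k = 2k', k' ≥ 1
      have hk2 : k = 2 * k' := by omega
      have hk'1 : 1 ≤ k' := by omega
      rcases Nat.le_one_iff_eq_zero_or_eq_one.mp (hle k') with htk | htk
      · -- τ k' = 0 : use IH
        obtain ⟨j', hj'1, hpre', hlt'⟩ := ih k' (by omega) hk'1
        refine ⟨2 * j', by omega, ?_, ?_⟩
        · intro i hi1 hij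
          rcases Nat.even_or_odd i with ⟨i', hi'⟩ | ⟨i', hi'⟩
          · have hi2 : i = 2 * i' := by omega
            have hi'1 : 1 ≤ i' := by omega
            have hi'j : i' < j' := by omega
            have e1 : k + i = 2 * (k' + i') := by omega
            rw [e1, hi2, he, he]
            exact hpre' i' hi'1 hi'j
          · rcases Nat.eq_zero_or_pos i' with hz | hpos
            · have e1 : k + i = 2 * k' + 1 := by omega
              have e2 : i = 1 := by omega
              rw [e1, e2, ho, htk, h1]
            · have hi'j : i' < j' := by omega
              have e1 : k + i = 2 * (k' + i') + 1 := by omega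
              rw [e1, hi', ho, ho, hpre' i' hpos hi'j]
        · have e1 : k + 2 * j' = 2 * (k' + j') := by omega
          rw [e1, he, he]
          exact hlt'
      · -- τ k' = 1 : immediate difference at 1
        refine ⟨1, le_rfl, by omega, ?_⟩
        have e1 : k + 1 = 2 * k' + 1 := by omega
        rw [e1, ho, htk, h1]
        omega
    · -- k = 2k' + 1
      rcases Nat.eq_zero_or_pos k' with hz | hpos
      · -- k = 1
        refine ⟨2, by omega, ?_, ?_⟩
        · intro i hi1 hij
          have hi : i = 1 := by omega
          subst hi
          have e1 : k + 1 = 2 * 1 := by omega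
          rw [e1, he]
        · have e1 : k + 2 = 2 * 1 + 1 := by omega
          rw [e1, ho, h1, h2]
          omega
      · rcases Nat.le_one_iff_eq_zero_or_eq_one.mp (hle (k' + 1)) with htk | htk
        · refine ⟨1, le_rfl, by omega, ?_⟩
          have e1 : k + 1 = 2 * (k' + 1) := by omega
          rw [e1, he, htk, h1]
          omega
        · refine ⟨2, by omega, ?_, ?_⟩
          · intro i hi1 hij
            have hi : i = 1 := by omega
            subst hi
            have e1 : k + 1 = 2 * (k' + 1) := by omega
            rw [e1, he, htk, h1]
          · have e1 : k + 2 = 2 * (k' + 1) + 1 := by omega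
            rw [e1, ho, htk, h2]
            omega

end TM

end QsP
namespace QsP

/-- The periodic sequence `(τ_1 ⋯ τ_{2^m - 1} (τ_{2^m} - 1))^∞` (0-indexed digits). -/
def gam (τ : ℕ → ℕ) (m : ℕ) : ℕ → ℕ :=
  fun k => if k % 2 ^ m = 2 ^ m - 1 then 0 else τ (k % 2 ^ m + 1)

section Gam

variable {τ : ℕ → ℕ} {m : ℕ} {q : ℝ}

lemma gam_mod (k : ℕ) : gam τ m k = gam τ m (k % 2 ^ m) := by
  unfold gam
  rw [Nat.mod_mod_of_dvd k (dvd_refl (2 ^ m))]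

lemma gam_add_mod (a j : ℕ) : gam τ m (a + j) = gam τ m (a % 2 ^ m + j) := by
  unfold gam
  rw [Nat.mod_add_mod]

lemma gam_eq_tau {k : ℕ} (hk : k < 2 ^ m - 1) : gam τ m k = τ (k + 1) := by
  unfold gam
  have hp : 0 < 2 ^ m := Nat.pos_of_ne_zero (by positivity)
  rw [Nat.mod_eq_of_lt (by omega), if_neg (by omega)]

lemma gam_last : gam τ m (2 ^ m - 1) = 0 := by
  unfold gam
  have hp : 0 < 2 ^ m := Nat.pos_of_ne_zero (by positivity)
  rw [Nat.mod_eq_of_lt (by omega), if_pos rfl]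

lemma gam_le_one (hτ : IsThueMorse τ) : ∀ k, gam τ m k ≤ 1 := by
  intro k
  unfold gam
  split
  · omega
  · exact tau_le_one hτ _

lemma gam_selfmax (hτ : IsThueMorse τ) (hm : 1 ≤ m) :
    ∀ k, (∀ i, gam τ m (k + i) = gam τ m i) ∨
      ∃ j, (∀ i, i < j → gam τ m (k + i) = gam τ m i) ∧ gam τ m (k + j) < gam τ m j := by
  intro k
  set p := 2 ^ m with hp
  have hp2 : 2 ≤ p := by
    rw [hp]
    calc 2 = 2 ^ 1 := rfl
    _ ≤ 2 ^ m := Nat.pow_le_pow_right (by norm_num) hm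
  have hp0 : 0 < p := by omega
  set k' := k % p with hk'
  have hk'p : k' < p := Nat.mod_lt _ hp0
  by_cases hk0 : k' = 0
  · left
    intro i
    rw [gam_add_mod, ← hk', hk0, Nat.zero_add]
  · right
    have hk'1 : 1 ≤ k' := by omega
    obtain ⟨j₀, hj1, hpre, hlt⟩ := tm_shift_lt hτ k' hk'1
    have hd1 : τ (k' + j₀) = 0 ∧ τ j₀ = 1 := by
      have := tau_le_one hτ (k' + j₀)
      have := tau_le_one hτ j₀
      omega
    have hne : k' + j₀ ≠ p := by
      intro h
      have := tau_pow2 hτ m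
      rw [← hp, ← h] at this
      omega
    rcases Nat.lt_or_ge (k' + j₀) p with hcase | hcase
    · -- difference inside the word, at position j₀ - 1
      refine ⟨j₀ - 1, ?_, ?_⟩
      · intro i hi
        rw [gam_add_mod, ← hk']
        have h1 : k' + i < p - 1 := by omega
        have h2 : i < p - 1 := by omega
        rw [gam_eq_tau h1, gam_eq_tau h2]
        have h3 := hpre (i + 1) (by omega) (by omega)
        have e : k' + i + 1 = k' + (i + 1) := by omega
        rw [e, h3]
      · rw [gam_add_mod, ← hk']
        have h1 : k' + (j₀ - 1) < p - 1 := by omega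
        have h2 : j₀ - 1 < p - 1 := by omega
        rw [gam_eq_tau h1, gam_eq_tau h2]
        have e1 : k' + (j₀ - 1) + 1 = k' + j₀ := by omega
        have e2 : j₀ - 1 + 1 = j₀ := by omega
        rw [e1, e2]
        omega
    · -- difference at position p - k' - 1 where gam wraps to 0
      have hgt : p < k' + j₀ := by omega
      refine ⟨p - k' - 1, ?_, ?_⟩
      · intro i hi
        rw [gam_add_mod, ← hk']
        have h1 : k' + i < p - 1 := by omega
        have h2 : i < p - 1 := by omega
        rw [gam_eq_tau h1, gam_eq_tau h2]
        have h3 := hpre (i + 1) (by omega) (by omega)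
        have e : k' + i + 1 = k' + (i + 1) := by omega
        rw [e, h3]
      · rw [gam_add_mod, ← hk']
        have e1 : k' + (p - k' - 1) = p - 1 := by omega
        rw [e1, gam_last]
        have h2 : p - k' - 1 < p - 1 := by omega
        rw [gam_eq_tau h2]
        have e2 : p - k' - 1 + 1 = p - k' := by omega
        rw [e2]
        have h3 : τ (k' + (p - k')) = τ (p - k') := hpre (p - k') (by omega) (by omega)
        have e3 : k' + (p - k') = p := by omega
        rw [e3] at h3
        have h4 := tau_pow2 hτ m
        rw [← hp] at h4
        omega

lemma gam_anti (hτ : IsThueMorse τ) (hm : 1 ≤ m) :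
    ∀ k, gam τ m (2 ^ (m - 1) + k) = 1 - gam τ m k := by
  intro k
  set p := 2 ^ m with hp
  set h := 2 ^ (m - 1) with hh
  have hph : p = 2 * h := by
    rw [hp, hh]
    rw [← pow_succ']
    congr 1
    omega
  have hh1 : 1 ≤ h := Nat.one_le_two_pow
  have hp0 : 0 < p := by omega
  have hth : τ h = 1 := by rw [hh]; exact tau_pow2 hτ _
  set r := k % p with hr
  have hrp : r < p := Nat.mod_lt _ hp0
  have hL : gam τ m (h + k) = gam τ m (h + r) := by
    rw [Nat.add_comm h k, gam_add_mod, ← hr, Nat.add_comm r h]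
  have hR : gam τ m k = gam τ m r := gam_mod k
  rw [hL, hR]
  rcases Nat.lt_or_ge r h with hcase | hcase
  · -- r < h
    rcases Nat.lt_or_ge (h + r) (p - 1) with hcc | hcc
    · have h1 : r < p - 1 := by omega
      rw [gam_eq_tau hcc, gam_eq_tau h1]
      have hblock := tau_block hτ (m - 1) (r + 1) (by rw [← hh]; omega)
      rw [← hh] at hblock
      have e1 : h + r + 1 = h + (r + 1) := by omega
      rw [e1, hblock]
    · have he : h + r = p - 1 := by omega
      rw [he, gam_last]
      have h1 : r < p - 1 := by omega
      rw [gam_eq_tau h1]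
      have e1 : r + 1 = h := by omega
      rw [e1, hth]
  · -- r ≥ h
    set s := r - h with hs
    have hsh : s < h := by omega
    have he : (h + r) % p = s := by
      have e1 : h + r = s + p := by omega
      rw [e1, Nat.add_mod_right, Nat.mod_eq_of_lt (by omega)]
    have hgs : gam τ m (h + r) = gam τ m s := by rw [gam_mod, he]
    rw [hgs]
    have hsne : s < p - 1 := by omega
    rw [gam_eq_tau hsne]
    rcases Nat.lt_or_ge r (p - 1) with hcc | hcc
    · rw [gam_eq_tau hcc]
      have hs1 : s + 1 < h := by omega
      have hblock := tau_block hτ (m - 1) (s + 1) (by rw [← hh]; omega)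
      rw [← hh] at hblock
      have e1 : r + 1 = h + (s + 1) := by omega
      rw [e1, hblock]
      have := tau_le_one hτ (s + 1)
      omega
    · have he2 : r = p - 1 := by omega
      rw [he2, gam_last]
      have e1 : s + 1 = h := by omega
      rw [e1, hth]

lemma gam_val (hτ : IsThueMorse τ) (hm : 1 ≤ m) (hq1 : 1 < q)
    (hsum : (1:ℝ) = ∑ i ∈ Finset.range (2 ^ m), (τ (i + 1) : ℝ) / q ^ (i + 1)) :
    R q (gam τ m) 0 = 1 := by
  have hp2 : 2 ≤ 2 ^ m := by
    calc 2 = 2 ^ 1 := rfl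
    _ ≤ 2 ^ m := Nat.pow_le_pow_right (by norm_num) hm
  have hg1 : ∀ k, gam τ m k ≤ 1 := gam_le_one hτ
  have hq0 : (0:ℝ) < q := q0 hq1
  have hper : R q (gam τ m) (0 + 2 ^ m) = R q (gam τ m) 0 := by
    refine R_congr fun k => ?_
    rw [Nat.zero_add, Nat.zero_add, Nat.add_comm (2 ^ m) k]
    rw [gam_mod (k + 2 ^ m), Nat.add_mod_right, ← gam_mod]
  have hps : 2 ^ m = (2 ^ m - 1) + 1 := by omega
  have hsum' : (1:ℝ) = (∑ i ∈ Finset.range (2 ^ m - 1), (τ (i + 1) : ℝ) / q ^ (i + 1))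
      + (τ (2 ^ m) : ℝ) / q ^ (2 ^ m) := by
    have h := hsum
    rw [hps] at h
    rw [Finset.sum_range_succ] at h
    rw [← hps] at h
    exact h
  have htp : (τ (2 ^ m) : ℝ) = 1 := by exact_mod_cast tau_pow2 hτ m
  have hW : (∑ k ∈ Finset.range (2 ^ m), (gam τ m (0 + k) : ℝ) / q ^ (k + 1))
      = 1 - 1 / q ^ (2 ^ m) := by
    rw [hps, Finset.sum_range_succ, ← hps]
    have hlast : (gam τ m (0 + (2 ^ m - 1)) : ℝ) = 0 := by
      rw [Nat.zero_add, gam_last]; norm_num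
    have hmain : (∑ k ∈ Finset.range (2 ^ m - 1), (gam τ m (0 + k) : ℝ) / q ^ (k + 1))
        = ∑ k ∈ Finset.range (2 ^ m - 1), (τ (k + 1) : ℝ) / q ^ (k + 1) := by
      refine Finset.sum_congr rfl fun k hk => ?_
      rw [Finset.mem_range] at hk
      rw [Nat.zero_add, gam_eq_tau (by omega)]
    rw [hlast, hmain, zero_div]
    rw [htp] at hsum'
    linarith
  have hsplit := R_split hq1 hg1 0 (2 ^ m)
  rw [hper, hW] at hsplit
  have hpow : (1:ℝ) < q ^ (2 ^ m) := one_lt_pow₀ hq1 (by positivity)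
  have hu : (1:ℝ) / q ^ (2 ^ m) < 1 := by
    rw [div_lt_one (by positivity)]
    exact hpow
  have hfac : (R q (gam τ m) 0 - 1) * (1 - 1 / q ^ (2 ^ m)) = 0 := by
    linear_combination hsplit
  rcases mul_eq_zero.mp hfac with h | h
  · linarith
  · linarith

lemma gam_pos (hτ : IsThueMorse τ) (hm : 1 ≤ m) (hq1 : 1 < q) :
    ∀ a, 0 < R q (gam τ m) a := by
  intro a
  set p := 2 ^ m with hp
  have hp2 : 2 ≤ p := by
    rw [hp]
    calc 2 = 2 ^ 1 := rfl
    _ ≤ 2 ^ m := Nat.pow_le_pow_right (by norm_num) hm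
  have hp0 : 0 < p := by omega
  set r := a % p with hr
  have hrp : r < p := Nat.mod_lt _ hp0
  have hkey : ∃ k, gam τ m (a + k) = 1 := by
    by_cases h0 : r = 0
    · refine ⟨0, ?_⟩
      rw [Nat.add_zero, gam_mod, ← hr, h0]
      unfold gam
      rw [Nat.zero_mod, if_neg (by omega)]
      exact tau1 hτ
    · refine ⟨p - r, ?_⟩
      have h1 : (a + (p - r)) % p = 0 := by
        rw [← Nat.mod_add_mod, ← hr]
        have : r + (p - r) = p := by omega
        rw [this, Nat.mod_self]
      rw [gam_mod, h1]
      unfold gam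
      rw [Nat.zero_mod, if_neg (by omega)]
      exact tau1 hτ
  obtain ⟨k, hk⟩ := hkey
  exact R_pos hq1 (gam_le_one hτ) (m := a) (k := k) (by omega)

lemma gam_shift_le_one (hτ : IsThueMorse τ) (hm : 1 ≤ m) (hq1 : 1 < q)
    (hval : R q (gam τ m) 0 = 1) : ∀ a, R q (gam τ m) a ≤ 1 := by
  classical
  set p := 2 ^ m with hp
  have hp2 : 2 ≤ p := by
    rw [hp]
    calc 2 = 2 ^ 1 := rfl
    _ ≤ 2 ^ m := Nat.pow_le_pow_right (by norm_num) hm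
  have hp0 : 0 < p := by omega
  have hg1 : ∀ k, gam τ m k ≤ 1 := gam_le_one hτ
  have hRmod : ∀ a, R q (gam τ m) a = R q (gam τ m) (a % p) := by
    intro a
    refine R_congr fun k => ?_
    rw [gam_add_mod, hp]
  have hFne : (Finset.range p).Nonempty := ⟨0, Finset.mem_range.mpr hp0⟩
  obtain ⟨ks, hksF, hMeq⟩ := Finset.exists_mem_eq_sup' hFne (fun k => R q (gam τ m) k)
  have hub : ∀ a, R q (gam τ m) a ≤ (Finset.range p).sup' hFne (fun k => R q (gam τ m) k) := by
    intro a
    rw [hRmod a]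
    exact Finset.le_sup' _ (Finset.mem_range.mpr (Nat.mod_lt _ hp0))
  set M := (Finset.range p).sup' hFne (fun k => R q (gam τ m) k) with hM
  suffices hM1 : M ≤ 1 by
    intro a; exact le_trans (hub a) hM1
  by_contra hMgt
  push_neg at hMgt
  rcases gam_selfmax hτ hm ks with heq | ⟨j, hpre, hlt⟩
  · have : R q (gam τ m) ks = R q (gam τ m) 0 := by
      refine R_congr fun i => ?_
      rw [heq i, Nat.zero_add]
    rw [hval] at this
    rw [hMeq] at hMgt
    linarith
  · have hd0 : gam τ m (ks + j) = 0 ∧ gam τ m j = 1 := by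
      have := hg1 (ks + j); have := hg1 j; omega
    have h1 := self_val_at hq1 hg1 ks j (q := q)
    have h2 := self_val_at hq1 hg1 0 j (q := q)
    have hpres : (∑ k ∈ Finset.range j, (gam τ m (ks + k) : ℝ) / q ^ (k + 1))
        = ∑ k ∈ Finset.range j, (gam τ m (0 + k) : ℝ) / q ^ (k + 1) := by
      refine Finset.sum_congr rfl fun k hk => ?_
      rw [Finset.mem_range] at hk
      rw [hpre k hk, Nat.zero_add]
    have hub1 : R q (gam τ m) (ks + (j + 1)) ≤ M := hub _
    have hlb1 : 0 ≤ R q (gam τ m) (0 + (j + 1)) := R_nonneg hq1 _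
    have hMv : R q (gam τ m) ks = M := hMeq.symm
    have hz : (gam τ m (ks + j) : ℝ) = 0 := by rw [hd0.1]; norm_num
    have ho : (gam τ m (0 + j) : ℝ) = 1 := by rw [Nat.zero_add, hd0.2]; norm_num
    rw [hMv, hpres, hz, zero_div] at h1
    rw [hval, ho] at h2
    have hpow : (1:ℝ) < q ^ (j + 1) := one_lt_pow₀ hq1 (by omega)
    have hu1 : (0:ℝ) < 1 / q ^ (j + 1) := by positivity
    have hu2 : (1:ℝ) / q ^ (j + 1) < 1 := by
      rw [div_lt_one (by positivity)]; exact hpow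
    nlinarith [hub1, hlb1, hu1, hu2,
      mul_pos (sub_pos.mpr hMgt) (sub_pos.mpr hu2),
      mul_le_mul_of_nonneg_left hub1 (le_of_lt hu1),
      mul_nonneg (le_of_lt hu1) hlb1]

end Gam

end QsP
namespace QsP

section One

variable {τ : ℕ → ℕ} {m : ℕ} {q : ℝ}

/-- At a base where the value of `γ_m` is 1, any weak expansion of 1 equals `γ_m`. -/
lemma wcond_one_eq_gam (hτ : IsThueMorse τ) (hq1 : 1 < q) (hq2 : q < 2)
    (hgval : R q (gam τ m) 0 = 1) (hgle : ∀ a, R q (gam τ m) a ≤ 1)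
    (hgpos : ∀ a, 0 < R q (gam τ m) a)
    {h : ℕ → ℕ} (hw : WCond q h) (hval : R q h 0 = 1) : h = gam τ m := by
  classical
  obtain ⟨hh1, hwc⟩ := hw
  have hg1 : ∀ k, gam τ m k ≤ 1 := gam_le_one hτ
  by_contra hne
  have hex : ∃ n, h n ≠ gam τ m n := by
    by_contra hall; push_neg at hall; exact hne (funext hall)
  set n := Nat.find hex with hn
  have hdiff : h n ≠ gam τ m n := Nat.find_spec hex
  have hpre : ∀ i, i < n → h i = gam τ m i := by
    intro i hi
    have := Nat.find_min hex hi
    push_neg at this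
    exact this
  have hvv : R q h 0 = R q (gam τ m) 0 := by rw [hval, hgval]
  have hkey := digit_eq hq1 hh1 hg1 hvv hpre
  have hq0 : (0:ℝ) < q := q0 hq1
  have hqm : (0:ℝ) < q - 1 := by linarith
  rcases Nat.le_one_iff_eq_zero_or_eq_one.mp (hh1 n) with hh | hh
  · -- h n = 0, gam n = 1
    have hgn : gam τ m n = 1 := by have := hg1 n; omega
    rw [hh, hgn] at hkey
    push_cast at hkey
    have h1 := (hwc n).1 hh
    have h2 := hgpos (n + 1)
    linarith
  · -- h n = 1, gam n = 0
    have hgn : gam τ m n = 0 := by have := hg1 n; omega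
    rw [hh, hgn] at hkey
    push_cast at hkey
    have h1 := hgle (n + 1)
    have h2 := R_nonneg (d := h) hq1 (n + 1) (q := q)
    have h3 : R q h (n + 1) = 0 := by linarith
    have h4 := R_eq_zero hq1 hh1 h3
    have h5 : R q (refl h) (n + 1) = 1 / (q - 1) := by
      rw [R_refl hq1 hh1, h3, sub_zero]
    have h6 := (hwc n).2 hh
    rw [h5] at h6
    have h7 : (1:ℝ) < 1 / (q - 1) := by
      rw [lt_div_iff₀ hqm]
      linarith
    linarith

end One

end QsP
namespace QsP

section Tendsto

lemma tendsto_R {Qm : ℝ} (hq1 : 1 < Qm)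
    (f : ℕ → ℝ) (hfq : ∀ j, Qm < f j) (hfb : ∀ j, f j - Qm ≤ 1 / 2 ^ j)
    (cs : ℕ → ℕ → ℕ) (hcs : ∀ j i, cs j i ≤ 1)
    (e : ℕ → ℕ) (he : ∀ i, e i ≤ 1)
    (hagree : ∀ N, ∃ J, ∀ j, J ≤ j → ∀ i, i < N → cs j i = e i)
    (a : ℕ) :
    ∀ ε : ℝ, 0 < ε → ∃ j, (∀ i, i < a → cs j i = e i) ∧
      |R (f j) (cs j) a - R Qm e a| < ε := by
  intro ε hε
  have hq0 : (0:ℝ) < Qm := by linarith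
  have hqm : (0:ℝ) < Qm - 1 := by linarith
  have hr1 : (1:ℝ)/Qm < 1 := by rw [div_lt_one hq0]; exact hq1
  have hc2 : (0:ℝ) < 2 * (1/(Qm - 1)) := by positivity
  have hc1 : (0:ℝ) < 1/(Qm-1)^2 := by positivity
  obtain ⟨N, hN⟩ := exists_pow_lt_of_lt_one
    (show (0:ℝ) < (ε/2) / (2 * (1/(Qm-1))) by positivity) hr1
  have hN' : 2 * (1/Qm^N) * (1/(Qm-1)) < ε/2 := by
    calc 2 * (1/Qm^N) * (1/(Qm-1)) = (1/Qm)^N * (2*(1/(Qm-1))) := by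
          rw [one_div_pow]; ring
      _ < ((ε/2) / (2 * (1/(Qm-1)))) * (2*(1/(Qm-1))) := mul_lt_mul_of_pos_right hN hc2
      _ = ε/2 := div_mul_cancel₀ _ (ne_of_gt hc2)
  obtain ⟨j1, hj1⟩ := exists_pow_lt_of_lt_one
    (show (0:ℝ) < (ε/2)/(1/(Qm-1)^2) by positivity) (show (1:ℝ)/2 < 1 by norm_num)
  obtain ⟨J, hJ⟩ := hagree (a + N)
  refine ⟨max J j1, fun i hi => hJ _ (le_max_left _ _) i (by omega), ?_⟩
  set j := max J j1 with hjdef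
  have hagj : ∀ i, i < N → cs j (a + i) = e (a + i) :=
    fun i hi => hJ _ (le_max_left _ _) _ (by omega)
  have hest := est hq1 (le_of_lt (hfq j)) (fun t => hcs j t) he hagj
  have hdel : 1/(Qm-1) - 1/(f j - 1) ≤ (1/2^j) * (1/(Qm-1)^2) := by
    have h1 : Qm - 1 < f j - 1 := by have := hfq j; linarith
    have h2 : (0:ℝ) < f j - 1 := by linarith
    have e1 : 1/(Qm-1) - 1/(f j -1) = (f j - Qm)/((Qm-1)*(f j -1)) := by
      field_simp
      try ring
    rw [e1]
    have h3 : (f j - Qm)/((Qm-1)*(f j -1)) ≤ (f j - Qm)/((Qm-1)^2) := by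
      apply div_le_div_of_nonneg_left (by have := hfq j; linarith) (by positivity)
      nlinarith
    refine le_trans h3 ?_
    rw [div_eq_mul_one_div]
    exact mul_le_mul_of_nonneg_right (hfb j) (le_of_lt hc1)
  have hdelj : (1/2^j : ℝ) * (1/(Qm-1)^2) < ε/2 := by
    have h4 : ((1:ℝ)/2)^j ≤ (1/2)^j1 :=
      pow_le_pow_of_le_one (by norm_num) (by norm_num) (le_max_right J j1)
    have h5 := mul_lt_mul_of_pos_right hj1 hc1
    rw [div_mul_cancel₀ _ (ne_of_gt hc1)] at h5
    have h6 : ((1:ℝ)/2)^j * (1/(Qm-1)^2) ≤ ((1:ℝ)/2)^j1 * (1/(Qm-1)^2) :=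
      mul_le_mul_of_nonneg_right h4 (le_of_lt hc1)
    rw [one_div_pow] at h6
    linarith
  calc |R (f j) (cs j) a - R Qm e a|
      ≤ (1/(Qm-1) - 1/(f j -1)) + 2*(1/Qm^N)*(1/(Qm-1)) := hest
    _ < ε/2 + ε/2 := by linarith
    _ = ε := by ring

end Tendsto

end QsP
namespace QsP

lemma attain (τ : ℕ → ℕ) (hτ : IsThueMorse τ) (Q : ℕ → ℝ) (hQ : IsBaseSeq τ Q)
    {x : ℝ} (hx : 0 < x) {m : ℕ} (hm : 1 ≤ m) (hinf : sInf (UBases x) = Q m) :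
    Q m ∈ UBases x := by
  classical
  obtain ⟨hQ0, hQn⟩ := hQ
  obtain ⟨hq1, hq2, hqsum⟩ := hQn m hm
  by_contra hmem
  have hbdd : BddBelow (UBases x) := ⟨1, fun q hq => le_of_lt hq.1⟩
  have hSne : (UBases x).Nonempty := by
    by_contra hno
    rw [Set.not_nonempty_iff_eq_empty] at hno
    rw [hno, Real.sInf_empty] at hinf
    linarith
  have hgt : ∀ q ∈ UBases x, Q m < q := by
    intro q hq
    have h1 : Q m ≤ q := hinf ▸ csInf_le hbdd hq
    rcases lt_or_eq_of_le h1 with h | h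
    · exact h
    · exact absurd (h ▸ hq) hmem
  have key : ∀ ε : ℝ, 0 < ε → ∃ p ∈ UBases x, p < Q m + ε := by
    intro ε hε
    have : sInf (UBases x) < Q m + ε := by rw [hinf]; linarith
    exact exists_lt_of_csInf_lt hSne this
  have step : ∀ a : ℝ, Q m < a → ∃ b, b ∈ UBases x ∧ Q m < b ∧ b < a ∧ b - Q m ≤ (a - Q m)/2 := by
    intro a ha
    obtain ⟨b, hb, hblt⟩ := key ((a - Q m)/2) (by linarith)
    exact ⟨b, hb, hgt b hb, by linarith, by linarith⟩
  choose g hg1 hg2 hg3 hg4 using step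
  obtain ⟨b0, hb0U, hb0lt⟩ := key 1 one_pos
  have hb0gt : Q m < b0 := hgt _ hb0U
  let F : ℕ → {a : ℝ // a ∈ UBases x ∧ Q m < a} :=
    fun j => Nat.rec (⟨b0, hb0U, hb0gt⟩ : {a : ℝ // a ∈ UBases x ∧ Q m < a})
      (fun _ p => ⟨g p.1 p.2.2, hg1 p.1 p.2.2, hg2 p.1 p.2.2⟩) j
  have hFsucc : ∀ j, F (j+1) = ⟨g (F j).1 (F j).2.2, hg1 _ _, hg2 _ _⟩ := fun j => rfl
  set f : ℕ → ℝ := fun j => (F j).1 with hfdef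
  have hfU : ∀ j, f j ∈ UBases x := fun j => (F j).2.1
  have hfgt : ∀ j, Q m < f j := fun j => (F j).2.2
  have hfdec : ∀ j, f (j+1) < f j := by
    intro j
    show (F (j+1)).1 < (F j).1
    rw [hFsucc j]
    exact hg3 _ _
  have hfgap : ∀ j, f (j+1) - Q m ≤ (f j - Q m)/2 := by
    intro j
    show (F (j+1)).1 - Q m ≤ ((F j).1 - Q m)/2
    rw [hFsucc j]
    exact hg4 _ _
  have hf0 : f 0 - Q m ≤ 1 := by
    show b0 - Q m ≤ 1
    linarith
  have hfb : ∀ j, f j - Q m ≤ 1 / 2 ^ j := by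
    intro j
    induction j with
    | zero => simpa using hf0
    | succ n ih =>
      have h1 := hfgap n
      have h2 : (1:ℝ)/2^(n+1) = (1/2^n)/2 := by rw [pow_succ]; ring
      rw [h2]
      linarith
  have hfq1 : ∀ j, 1 < f j := fun j => (hfU j).1
  have hfq2 : ∀ j, f j < 2 := fun j => (hfU j).2.1
  have hexp : ∀ j, ∃ d, IsExpansion (f j) x d ∧ Cond (f j) d := by
    intro j
    obtain ⟨d, hd, hun⟩ := (hfU j).2.2
    exact ⟨d, hd, cond_of_unique (hfq1 j) (hfq2 j) hd (fun e he => hun e he)⟩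
  choose dd hdd1 hdd2 using hexp
  have hd1 : ∀ j i, dd j i ≤ 1 := fun j => (hdd1 j).1
  have hxR : ∀ j, x = R (f j) (dd j) 0 := fun j => by rw [(hdd1 j).2, seqVal_eq_R]
  have hnz : ∀ j, ∃ k, 1 ≤ dd j k := by
    intro j
    by_contra hno
    push_neg at hno
    have hzero : ∀ k, dd j k = 0 := fun k => by have := hno k; omega
    have hR0 : R (f j) (dd j) 0 = 0 := by
      rw [R]
      have hterm : ∀ k : ℕ, (dd j (0 + k) : ℝ) / (f j) ^ (k+1) = 0 := by
        intro k; rw [hzero (0 + k)]; norm_num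
      rw [tsum_congr hterm, tsum_zero]
    rw [← hxR j] at hR0
    linarith
  have hlex : ∀ j, seqLt (dd (j+1)) (dd j) := by
    intro j
    have hmono : Cond (f j) (dd (j+1)) :=
      cond_mono (hfq1 (j+1)) (le_of_lt (hfdec j)) (hdd2 (j+1))
    have hvlt : R (f j) (dd (j+1)) 0 < x := by
      rw [hxR (j+1)]
      obtain ⟨k, hk⟩ := hnz (j+1)
      exact R_strict_mono_q (hfq1 (j+1)) (hfdec j) (hd1 (j+1)) (m := 0) (k := k) (by simpa using hk)
    rcases eq_or_ne (dd (j+1)) (dd j) with heq | hne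
    · rw [heq, ← hxR j] at hvlt
      linarith
    rcases seqLt_trichotomy hne with h | h
    · exact h
    · exfalso
      have hc := R_lt_of_seqLt (hfq1 j) (hfq2 j) (hd1 j) hmono h
      rw [← hxR j] at hc
      linarith
  have hstab : ∀ I, ∃ J, ∀ j, J ≤ j → ∀ i, i ≤ I → dd j i = dd J i := by
    intro I
    have hanti : ∀ j, np (dd (j+1)) I ≤ np (dd j) I :=
      fun j => np_le_of_seqLt (hd1 (j+1)) (hd1 j) (hlex j) I
    obtain ⟨J, hJ⟩ := nat_antitone_stab (fun j => np (dd j) I) hanti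
    exact ⟨J, fun j hj i hi => np_inj (hd1 j) (hd1 J) (hJ j hj) i hi⟩
  choose J0 hJ0 using hstab
  set Dl : ℕ → ℕ := fun i => dd (J0 i) i with hDldef
  have claim : ∀ I j, J0 I ≤ j → ∀ i, i ≤ I → dd j i = Dl i := by
    intro I j hj i hi
    have h1 : dd j i = dd (J0 I) i := hJ0 I j hj i hi
    have h2 : dd (max (J0 I) (J0 i)) i = dd (J0 I) i := hJ0 I _ (le_max_left _ _) i hi
    have h3 : dd (max (J0 I) (J0 i)) i = dd (J0 i) i := hJ0 i _ (le_max_right _ _) i le_rfl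
    rw [h1, ← h2, h3]
  have hDl1 : ∀ i, Dl i ≤ 1 := fun i => hd1 _ i
  have hagree : ∀ N, ∃ J, ∀ j, J ≤ j → ∀ i, i < N → dd j i = Dl i :=
    fun N => ⟨J0 N, fun j hj i hi => claim N j hj i (by omega)⟩
  have htend := tendsto_R hq1 f hfgt hfb dd hd1 Dl hDl1 hagree
  have hxlim : x = R (Q m) Dl 0 := by
    by_contra hne
    have hpos : 0 < |x - R (Q m) Dl 0| := abs_pos.mpr (sub_ne_zero.mpr hne)
    obtain ⟨j, _, hj⟩ := htend 0 _ hpos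
    rw [← hxR j] at hj
    linarith
  have hW : WCond (Q m) Dl := by
    refine ⟨hDl1, fun i => ⟨fun h0 => ?_, fun h1 => ?_⟩⟩
    · by_contra hgt1
      push_neg at hgt1
      obtain ⟨j, hpre, hj⟩ := htend (i+1) _ (show 0 < R (Q m) Dl (i+1) - 1 by linarith)
      have hdi : dd j i = 0 := by rw [hpre i (by omega), h0]
      have hlt1 : R (f j) (dd j) (i+1) < 1 := ((hdd2 j).2 i).1 hdi
      rw [abs_lt] at hj
      linarith [hj.1]
    · by_contra hgt1
      push_neg at hgt1
      have htendr := tendsto_R hq1 f hfgt hfb (fun j => refl (dd j))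
        (fun j i => by simp only [refl]; omega) (refl Dl) (fun i => by simp only [refl]; omega)
        (fun N => by
          obtain ⟨J, hJ⟩ := hagree N
          exact ⟨J, fun j hj i hi => by simp only [refl]; rw [hJ j hj i hi]⟩)
      obtain ⟨j, hpre, hj⟩ := htendr (i+1) _ (show 0 < R (Q m) (refl Dl) (i+1) - 1 by linarith)
      have hdi : dd j i = 1 := by
        have hp := hpre i (by omega)
        simp only [refl] at hp
        have h2 := hd1 j i
        have h3 := hDl1 i
        omega
      have hlt1 : R (f j) (refl (dd j)) (i+1) < 1 := ((hdd2 j).2 i).2 hdi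
      rw [abs_lt] at hj
      linarith [hj.1]
  -- type Z contradiction at any exact index
  have caseZ : ∀ i1, Dl i1 = 0 → R (Q m) Dl (i1 + 1) = 1 → False := by
    intro i1 hz hone
    set j := J0 i1 with hjdef
    have hag : ∀ i, i ≤ i1 → dd j i = Dl i := fun i hi => claim i1 j le_rfl i hi
    set n := i1 + 1 with hndef
    have hsj := R_split (hfq1 j) (hd1 j) 0 n
    have hsq := R_split hq1 hDl1 0 n
    simp only [Nat.zero_add] at hsj hsq
    rw [← hxR j] at hsj
    rw [← hxlim] at hsq
    rw [hndef] at hsq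
    rw [hone] at hsq
    rw [← hndef] at hsq
    have hsumle : (∑ k ∈ Finset.range n, (dd j k : ℝ) / (f j) ^ (k+1))
        ≤ ∑ k ∈ Finset.range n, (Dl k : ℝ) / (Q m) ^ (k+1) := by
      refine Finset.sum_le_sum fun k hk => ?_
      rw [Finset.mem_range] at hk
      rw [hag k (by omega)]
      exact div_le_div_of_nonneg_left (by positivity) (by positivity)
        (pow_le_pow_left₀ (by linarith) (le_of_lt (hfgt j)) _)
    have hdij : dd j i1 = 0 := by rw [hag i1 le_rfl, hz]
    have hRlt : R (f j) (dd j) n < 1 := ((hdd2 j).2 i1).1 hdij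
    have hfn : (0:ℝ) < (f j)^n := pow_pos (by linarith [hfq1 j]) n
    have hqn : (0:ℝ) < (Q m)^n := pow_pos (by linarith) n
    have h5 : (1/(Q m)^n : ℝ) * 1 ≤ (1/(f j)^n) * R (f j) (dd j) n := by
      linarith [hsumle, hsj, hsq]
    have h7 : (f j)^n / (Q m)^n ≤ R (f j) (dd j) n := by
      have h6 := mul_le_mul_of_nonneg_left h5 (le_of_lt hfn)
      have e2 : (f j)^n * ((1/(f j)^n) * R (f j) (dd j) n) = R (f j) (dd j) n := by
        field_simp
      rw [e2] at h6
      calc (f j)^n/(Q m)^n = (f j)^n * (1/(Q m)^n * 1) := by ring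
        _ ≤ _ := h6
    have h8 : (1:ℝ) < (f j)^n / (Q m)^n := by
      rw [lt_div_iff₀ hqn, one_mul]
      exact pow_lt_pow_left₀ (hfgt j) (by linarith) (by omega)
    linarith
  -- dichotomy
  by_cases hstrict : ∀ i, (Dl i = 0 → R (Q m) Dl (i+1) < 1) ∧ (Dl i = 1 → R (Q m) (refl Dl) (i+1) < 1)
  · have hcond : Cond (Q m) Dl := ⟨hDl1, hstrict⟩
    have hux : HasUniqueExpansion (Q m) x := by
      rw [hxlim]
      exact hasUnique_of_cond hq1 hq2 hcond
    exact hmem ⟨hq1, hq2, hux⟩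
  · have hcase : ∃ i0, (Dl i0 = 0 ∧ R (Q m) Dl (i0+1) = 1)
        ∨ (Dl i0 = 1 ∧ R (Q m) (refl Dl) (i0+1) = 1) := by
      by_contra hno
      push_neg at hno
      apply hstrict
      intro i
      constructor
      · intro h0
        have hle := (hW.2 i).1 h0
        rcases lt_or_eq_of_le hle with h | h
        · exact h
        · exact absurd h ((hno i).1 h0)
      · intro h1
        have hle := (hW.2 i).2 h1
        rcases lt_or_eq_of_le hle with h | h
        · exact h
        · exact absurd h ((hno i).2 h1)
    obtain ⟨i0, hOZ⟩ := hcase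
    rcases hOZ with ⟨hz, hone⟩ | ⟨ho, hone⟩
    · exact caseZ i0 hz hone
    · -- type O: the reflected tail is a weak expansion of 1, hence equals γ_m
      set hb : ℕ → ℕ := fun k => 1 - Dl (i0 + 1 + k) with hhb
      have hb1 : ∀ k, hb k ≤ 1 := fun k => by simp only [hhb]; omega
      have hbval : R (Q m) hb 0 = 1 := by
        rw [← hone]
        refine (R_congr fun k => ?_).symm
        simp only [hhb, refl, Nat.zero_add]
      have hbW : WCond (Q m) hb := by
        refine ⟨hb1, fun k => ⟨fun h0 => ?_, fun h1 => ?_⟩⟩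
        · have hDk : Dl (i0 + 1 + k) = 1 := by
            have := hDl1 (i0 + 1 + k)
            simp only [hhb] at h0
            omega
          have heq : R (Q m) hb (k+1) = R (Q m) (refl Dl) (i0 + 1 + k + 1) := by
            refine R_congr fun t => ?_
            have e : i0 + 1 + (k + 1 + t) = i0 + 1 + k + 1 + t := by omega
            simp only [hhb, refl, e]
          rw [heq]
          exact (hW.2 (i0 + 1 + k)).2 hDk
        · have hDk : Dl (i0 + 1 + k) = 0 := by
            have := hDl1 (i0 + 1 + k)
            simp only [hhb] at h1
            omega
          have heq : R (Q m) (refl hb) (k+1) = R (Q m) Dl (i0 + 1 + k + 1) := by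
            refine R_congr fun t => ?_
            simp only [hhb, refl]
            have hD := hDl1 (i0 + 1 + (k + 1 + t))
            have e : i0 + 1 + (k + 1 + t) = i0 + 1 + k + 1 + t := by omega
            rw [← e]
            omega
          rw [heq]
          exact (hW.2 (i0 + 1 + k)).1 hDk
      have hgval : R (Q m) (gam τ m) 0 = 1 := gam_val hτ hm hq1 hqsum
      have hgle : ∀ a, R (Q m) (gam τ m) a ≤ 1 := gam_shift_le_one hτ hm hq1 hgval
      have hgpos : ∀ a, 0 < R (Q m) (gam τ m) a := gam_pos hτ hm hq1
      have hgam : hb = gam τ m := wcond_one_eq_gam hτ hq1 hq2 hgval hgle hgpos hbW hbval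
      have hp2 : 2 ≤ 2 ^ m := by
        calc 2 = 2 ^ 1 := rfl
        _ ≤ 2 ^ m := Nat.pow_le_pow_right (by norm_num) hm
      have hhalf : 2 ^ (m - 1) < 2 ^ m := Nat.pow_lt_pow_right (by norm_num) (by omega)
      have hh1 : 1 ≤ 2 ^ (m - 1) := Nat.one_le_two_pow
      have hth : τ (2 ^ (m - 1)) = 1 := tau_pow2 hτ _
      have hi1z : Dl (i0 + 2 ^ (m - 1)) = 0 := by
        have h1 : hb (2 ^ (m - 1) - 1) = gam τ m (2 ^ (m - 1) - 1) := by rw [hgam]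
        have h2 : gam τ m (2 ^ (m - 1) - 1) = 1 := by
          rw [gam_eq_tau (show 2 ^ (m-1) - 1 < 2 ^ m - 1 by omega)]
          have e : 2 ^ (m - 1) - 1 + 1 = 2 ^ (m - 1) := by omega
          rw [e, hth]
        simp only [hhb] at h1
        have e : i0 + 1 + (2 ^ (m - 1) - 1) = i0 + 2 ^ (m - 1) := by omega
        rw [e] at h1
        have := hDl1 (i0 + 2 ^ (m - 1))
        omega
      have hi1v : R (Q m) Dl (i0 + 2 ^ (m - 1) + 1) = 1 := by
        rw [← hgval]
        refine R_congr fun t => ?_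
        have h2 : hb (2 ^ (m - 1) + t) = 1 - gam τ m t := by
          rw [hgam]
          exact gam_anti hτ hm t
        simp only [hhb] at h2
        have e : i0 + 1 + (2 ^ (m - 1) + t) = i0 + 2 ^ (m - 1) + 1 + t := by omega
        rw [e] at h2
        have hga := gam_le_one hτ (m := m) t
        have hD := hDl1 (i0 + 2 ^ (m - 1) + 1 + t)
        have e2 : (0:ℕ) + t = t := by omega
        rw [e2]
        omega
      exact caseZ _ hi1z hi1v

end QsP
namespace QsP

lemma mem_Uset_iff {q x : ℝ} (hq1 : 1 < q) (hq2 : q < 2) :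
    x ∈ Uset q ↔ HasUniqueExpansion q x := by
  constructor
  · exact fun h => h.2
  · intro h
    refine ⟨?_, h⟩
    obtain ⟨d, hd, _⟩ := h
    obtain ⟨hdig, hval⟩ := hd
    have hx : x = R q d 0 := by rw [hval, seqVal_eq_R]
    rw [Set.mem_Icc]
    constructor
    · rw [hx]; exact R_nonneg hq1 0
    · rw [hx]; exact R_le_cap hq1 hdig 0

lemma ubase_lb {q x : ℝ} (hx : 0 < x) (hq : q ∈ UBases x) : min qG (1 + 1/x) ≤ q := by
  obtain ⟨hq1, hq2, hu⟩ := hq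
  rcases le_or_gt q qG with hle | hlt
  · obtain ⟨d, hd, hcond⟩ := exists_cond_of_unique hq1 hq2 hu
    have hconst := ejk_const hq1 hle hcond
    have hx' : x = R q d 0 := by rw [hd.2, seqVal_eq_R]
    rcases Nat.le_one_iff_eq_zero_or_eq_one.mp (hd.1 0) with h0 | h0
    · exfalso
      have hzero : ∀ k, d k = 0 := fun k => by rw [hconst k, h0]
      have hR0 : R q d 0 = 0 := by
        rw [R]
        have hterm : ∀ k : ℕ, (d (0 + k) : ℝ) / q ^ (k+1) = 0 := fun k => by
          rw [hzero (0 + k)]; norm_num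
        rw [tsum_congr hterm, tsum_zero]
      rw [hR0] at hx'
      linarith
    · have hone : ∀ k, d k = 1 := fun k => by rw [hconst k, h0]
      have hxc : x = 1/(q-1) := by
        rw [hx', R]
        have hterm : ∀ k : ℕ, (d (0 + k) : ℝ) / q ^ (k+1) = 1 / q ^ (k+1) := fun k => by
          rw [hone (0 + k)]; norm_num
        rw [tsum_congr hterm, tsum_geom hq1]
      have hqm : (0:ℝ) < q - 1 := by linarith
      have hqe : q = 1 + 1/x := by
        rw [hxc]
        field_simp
        ring
      rw [hqe]
      exact min_le_right _ _
  · exact le_trans (min_le_left _ _) (le_of_lt hlt)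

lemma Q_mono (τ : ℕ → ℕ) (Q : ℕ → ℝ) (hτ : IsThueMorse τ) (hQ : IsBaseSeq τ Q) :
    ∀ k, Q k < Q (k+1) := by
  obtain ⟨hQ0, hQn⟩ := hQ
  intro k
  rcases Nat.eq_zero_or_pos k with h0 | hpos
  · subst h0; rw [hQ0]; exact (hQn 1 le_rfl).1
  · obtain ⟨hk1, hk2, hksum⟩ := hQn k hpos
    obtain ⟨hk1', hk2', hksum'⟩ := hQn (k+1) (by omega)
    by_contra hle
    push_neg at hle
    have hpk : (1:ℕ) ≤ 2 ^ k := Nat.one_le_two_pow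
    have hpk2 : 2 ^ k < 2 ^ (k+1) := Nat.pow_lt_pow_right (by norm_num) (by omega)
    have hsplit : (∑ i ∈ Finset.range (2^(k+1)), (τ (i+1):ℝ)/(Q k)^(i+1))
        = (∑ i ∈ Finset.range (2^k), (τ (i+1):ℝ)/(Q k)^(i+1))
          + ∑ i ∈ Finset.Ico (2^k) (2^(k+1)), (τ (i+1):ℝ)/(Q k)^(i+1) := by
      rw [Finset.range_eq_Ico,
        ← Finset.sum_Ico_consecutive _ (Nat.zero_le _) (le_of_lt hpk2), ← Finset.range_eq_Ico]
    have hextra : (0:ℝ) < ∑ i ∈ Finset.Ico (2^k) (2^(k+1)), (τ (i+1):ℝ)/(Q k)^(i+1) := by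
      have hmem : 2^(k+1) - 1 ∈ Finset.Ico (2^k) (2^(k+1)) := by
        rw [Finset.mem_Ico]
        omega
      have hq0 : (0:ℝ) < Q k := by linarith
      refine Finset.sum_pos' (fun i _ => by positivity) ⟨2^(k+1) - 1, hmem, ?_⟩
      have ht : τ (2^(k+1) - 1 + 1) = 1 := by
        have e : 2^(k+1) - 1 + 1 = 2^(k+1) := by omega
        rw [e]
        exact tau_pow2 hτ (k+1)
      rw [ht]
      positivity
    have hge : (1:ℝ) < ∑ i ∈ Finset.range (2^(k+1)), (τ (i+1):ℝ)/(Q k)^(i+1) := by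
      rw [hsplit, ← hksum]
      linarith
    have hmono : (∑ i ∈ Finset.range (2^(k+1)), (τ (i+1):ℝ)/(Q k)^(i+1))
        ≤ ∑ i ∈ Finset.range (2^(k+1)), (τ (i+1):ℝ)/(Q (k+1))^(i+1) := by
      refine Finset.sum_le_sum fun i _ => ?_
      exact div_le_div_of_nonneg_left (by positivity) (by positivity)
        (pow_le_pow_left₀ (by linarith) hle _)
    rw [← hksum'] at hmono
    linarith

lemma Q_le_mono (τ : ℕ → ℕ) (Q : ℕ → ℝ) (hτ : IsThueMorse τ) (hQ : IsBaseSeq τ Q) :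
    ∀ a b, a ≤ b → Q a ≤ Q b := by
  intro a b hab
  induction b, hab using Nat.le_induction with
  | base => exact le_rfl
  | succ n hn ih => exact le_trans ih (le_of_lt (Q_mono τ Q hτ hQ n))

lemma Q_ge_one (τ : ℕ → ℕ) (Q : ℕ → ℝ) (hQ : IsBaseSeq τ Q) : ∀ k, 1 ≤ Q k := by
  intro k
  rcases Nat.eq_zero_or_pos k with h0 | hpos
  · subst h0; rw [hQ.1]
  · exact le_of_lt (hQ.2 k hpos).1

lemma chain (τ : ℕ → ℕ) (Q : ℕ → ℝ) (hτ : IsThueMorse τ) (hQ : IsBaseSeq τ Q) :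
    ∀ N q, 1 < q → q ≤ Q N → ∃ k, 1 ≤ k ∧ k ≤ N ∧ Q (k-1) < q ∧ q ≤ Q k := by
  intro N
  induction N with
  | zero =>
    intro q hq hqle
    rw [hQ.1] at hqle
    linarith
  | succ n ih =>
    intro q hq hqle
    rcases le_or_gt q (Q n) with h | h
    · obtain ⟨k, h1, h2, h3, h4⟩ := ih q hq h
      exact ⟨k, h1, by omega, h3, h4⟩
    · refine ⟨n+1, by omega, le_rfl, ?_, hqle⟩
      simpa using h

end QsP
/-- For `x > 0` and `n ≥ 1`, `q_s(x) ∈ (q_{n-1}, q_n]` iff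
`x ∈ D_n \ ⋃_{k=1}^{n-1} D_k`. -/
theorem qs_mem_Ioc_iff (τ : ℕ → ℕ) (hτ : IsThueMorse τ)
    (Q : ℕ → ℝ) (hQ : IsBaseSeq τ Q)
    (x : ℝ) (hx : 0 < x) (n : ℕ) (hn : 1 ≤ n) :
    qs x ∈ Set.Ioc (Q (n - 1)) (Q n) ↔
      x ∈ D Q n \ ⋃ k ∈ Finset.Icc 1 (n - 1), D Q k := by
  classical
  have hbdd : BddBelow (UBases x) := ⟨1, fun q hq => le_of_lt hq.1⟩
  have hq1n : 1 < Q n := (hQ.2 n hn).1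
  have hq2n : Q n < 2 := (hQ.2 n hn).2.1
  have hQge1 := QsP.Q_ge_one τ Q hQ
  have hQn1lt : Q (n-1) < Q n := by
    have h := QsP.Q_mono τ Q hτ hQ (n-1)
    have e : n - 1 + 1 = n := by omega
    rwa [e] at h
  have hDmem : ∀ k, 1 ≤ k →
      (x ∈ D Q k ↔ ∃ q, q ∈ Set.Ioc (Q (k-1)) (Q k) ∧ q ∈ UBases x) := by
    intro k hk
    rw [D]
    simp only [Set.mem_iUnion, exists_prop]
    constructor
    · rintro ⟨q, hqI, hqU⟩
      have hq1 : 1 < q := lt_of_le_of_lt (hQge1 (k-1)) hqI.1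
      have hq2 : q < 2 := lt_of_le_of_lt hqI.2 (hQ.2 k hk).2.1
      exact ⟨q, hqI, hq1, hq2, hqU.2⟩
    · rintro ⟨q, hqI, hqU⟩
      exact ⟨q, hqI, (QsP.mem_Uset_iff hqU.1 hqU.2.1).mpr hqU.2.2⟩
  have hUnion : (x ∈ ⋃ k ∈ Finset.Icc 1 (n-1), D Q k) ↔ ∃ q ∈ UBases x, q ≤ Q (n-1) := by
    simp only [Set.mem_iUnion, exists_prop]
    constructor
    · rintro ⟨k, hkI, hkD⟩
      rw [Finset.mem_Icc] at hkI
      obtain ⟨q, hqI, hqU⟩ := (hDmem k hkI.1).mp hkD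
      exact ⟨q, hqU, le_trans hqI.2 (QsP.Q_le_mono τ Q hτ hQ k (n-1) hkI.2)⟩
    · rintro ⟨q, hqU, hqle⟩
      obtain ⟨k, hk1, hk2, hk3, hk4⟩ := QsP.chain τ Q hτ hQ (n-1) q hqU.1 hqle
      exact ⟨k, Finset.mem_Icc.mpr ⟨hk1, hk2⟩, (hDmem k hk1).mpr ⟨q, ⟨hk3, hk4⟩, hqU⟩⟩
  constructor
  · rintro ⟨hlo, hhi⟩
    have hSne : (UBases x).Nonempty := by
      by_contra hno
      rw [Set.not_nonempty_iff_eq_empty] at hno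
      rw [qs, hno, Real.sInf_empty] at hlo
      linarith [hQge1 (n-1)]
    constructor
    · rcases lt_or_eq_of_le hhi with h | h
      · obtain ⟨q, hqU, hqlt⟩ := exists_lt_of_csInf_lt hSne (show sInf (UBases x) < Q n from h)
        have hqge : Q (n-1) < q :=
          lt_of_lt_of_le hlo (show qs x ≤ q from csInf_le hbdd hqU)
        exact (hDmem n hn).mpr ⟨q, ⟨hqge, le_of_lt hqlt⟩, hqU⟩
      · have hatt := QsP.attain τ hτ Q hQ hx hn (show sInf (UBases x) = Q n from h)
        exact (hDmem n hn).mpr ⟨Q n, ⟨hQn1lt, le_rfl⟩, hatt⟩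
    · intro hmem
      rw [hUnion] at hmem
      obtain ⟨q, hqU, hqle⟩ := hmem
      have hq : qs x ≤ q := csInf_le hbdd hqU
      linarith
  · rintro ⟨hD, hnotU⟩
    obtain ⟨q0, hq0I, hq0U⟩ := (hDmem n hn).mp hD
    have hSne : (UBases x).Nonempty := ⟨q0, hq0U⟩
    rw [hUnion] at hnotU
    push_neg at hnotU
    have hgtall : ∀ q ∈ UBases x, Q (n-1) < q := fun q hq => hnotU q hq
    constructor
    · have hge : Q (n-1) ≤ qs x := le_csInf hSne (fun q hq => le_of_lt (hgtall q hq))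
      rcases lt_or_eq_of_le hge with h | h
      · exact h
      · exfalso
        rcases Nat.eq_zero_or_pos (n-1) with h0 | hpos
        · rw [h0, hQ.1] at h
          have hlb : ∀ q ∈ UBases x, min qG (1 + 1/x) ≤ q := fun q hq => QsP.ubase_lb hx hq
          have hmin : min qG (1 + 1/x) ≤ qs x := le_csInf hSne hlb
          have h1 : 1 < qG := QsP.qG_gt_one
          have h2 : 1 < 1 + 1/x := by
            have : 0 < 1/x := by positivity
            linarith
          have h3 : 1 < min qG (1+1/x) := lt_min h1 h2
          rw [← h] at hmin
          linarith
        · have hatt := QsP.attain τ hτ Q hQ hx hpos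
            (show sInf (UBases x) = Q (n-1) from h.symm)
          exact absurd (hgtall _ hatt) (lt_irrefl _)
    · exact le_trans (csInf_le hbdd hq0U) hq0I.2
end
end
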